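/- arXiv:0707.3231 — 4 statements merged into one kernel-verified Lean document; each statement's English description precedes it below -/
import Mathlib

section
/- Let A be a finite set of edge subsets (intact states) of a finite edge set E, each a ∈ A having at least one s-t path, with w(a) = ∏_{e∈a} q(e) ∏_{e∉a}(1−q(e)). Then w(Ω)/w(A) ≤ ∏_{e∈E} (1+q(e)), where w(Ω) = ∑_{a∈A} |P(a)| w(a). -/
variable {V : Type*} [Fintype V] [DecidableEq V]

/-- `l` is a list of consecutive edges forming a directed path from `s` to `t`. -/
def IsPathList (s t : V) (l : List (V × V)) : Prop :=
  l ≠ [] ∧ l.Chain' (fun e f => e.2 = f.1) ∧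
    l.head?.map Prod.fst = some s ∧ l.getLast?.map Prod.snd = some t

/-- `γ` is (the edge set of) a directed path from `s` to `t` using edges of `E`. -/
def IsSTPath (E : Finset (V × V)) (s t : V) (γ : Finset (V × V)) : Prop :=
  ∃ l : List (V × V), l.toFinset = γ ∧ (∀ e ∈ l, e ∈ E) ∧ IsPathList s t l

open Finset

/-- Discrepancy between in-degree and out-degree of `v` in the edge set `a`. -/
private def edgeDelta (a : Finset (V × V)) (v : V) : ℤ :=
  ((a.filter (fun e => e.2 = v)).card : ℤ) - ((a.filter (fun e => e.1 = v)).card : ℤ)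

private lemma edgeDelta_insert {a : Finset (V × V)} {e : V × V} (he : e ∉ a) (v : V) :
    edgeDelta (insert e a) v =
      edgeDelta a v + (if e.2 = v then 1 else 0) - (if e.1 = v then 1 else 0) := by
  have h2 : e ∉ a.filter (fun f => f.2 = v) := fun h => he (mem_filter.mp h).1
  have h1 : e ∉ a.filter (fun f => f.1 = v) := fun h => he (mem_filter.mp h).1
  unfold edgeDelta
  by_cases hb : e.2 = v <;> by_cases ha : e.1 = v <;>
    simp [filter_insert, hb, ha, card_insert_of_notMem, h1, h2] <;> push_cast <;> ring

private lemma edgeDelta_union {a b : Finset (V × V)} (h : Disjoint a b) (v : V) :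
    edgeDelta (a ∪ b) v = edgeDelta a v + edgeDelta b v := by
  unfold edgeDelta
  rw [filter_union, filter_union, card_union_of_disjoint (disjoint_filter_filter h),
    card_union_of_disjoint (disjoint_filter_filter h)]
  push_cast; ring

private lemma chain_topo {E : Finset (V × V)} {topo : V → ℕ}
    (hac : ∀ e ∈ E, topo e.1 < topo e.2) :
    ∀ (l : List (V × V)) (e : V × V), (e :: l).Chain' (fun e f => e.2 = f.1) →
      (∀ f ∈ e :: l, f ∈ E) → ∀ f ∈ l, topo e.2 ≤ topo f.1 := by
  intro l
  induction l with
  | nil => intro e _ _ f hf; simp at hf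
  | cons g l ih =>
    intro e hch hE f hf
    have h1 : e.2 = g.1 := (List.isChain_cons_cons.mp hch).1
    rcases List.mem_cons.mp hf with rfl | hf
    · rw [h1]
    · have h2 : topo g.2 ≤ topo f.1 := by
        refine ih g ?_ ?_ f hf
        · exact (List.isChain_cons_cons.mp hch).2
        · intro x hx; exact hE x (List.mem_cons_of_mem _ hx)
      have h3 : topo g.1 < topo g.2 := hac g (hE g (by simp))
      rw [h1]; omega

private lemma path_delta {E : Finset (V × V)} {topo : V → ℕ}
    (hac : ∀ e ∈ E, topo e.1 < topo e.2) :
    ∀ (l : List (V × V)) (s t : V), l.Chain' (fun e f => e.2 = f.1) →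
      (∀ f ∈ l, f ∈ E) → l.head?.map Prod.fst = some s →
      l.getLast?.map Prod.snd = some t →
      ∀ v, edgeDelta l.toFinset v =
        (if v = t then 1 else 0) - (if v = s then 1 else 0) := by
  intro l
  induction l with
  | nil => intro s t _ _ hh _ v; simp at hh
  | cons e l ih =>
    intro s t hch hE hh hl v
    have hs : e.1 = s := by simpa using hh
    cases l with
    | nil =>
      have ht : e.2 = t := by simpa using hl
      have h12 : e.1 ≠ e.2 := by
        have := hac e (hE e (by simp)); intro h; rw [h] at this; omega
      subst hs; subst ht
      unfold edgeDelta
      simp only [List.toFinset_cons, List.toFinset_nil, insert_empty_eq, filter_singleton]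
      by_cases hb : e.2 = v <;> by_cases ha : e.1 = v <;>
        simp [hb, ha, eq_comm (a := v)]
    | cons g l' =>
      have h1 : e.2 = g.1 := (List.isChain_cons_cons.mp hch).1
      have htail : edgeDelta (g :: l').toFinset v =
          (if v = t then 1 else 0) - (if v = g.1 then 1 else 0) := by
        refine ih g.1 t (List.isChain_cons_cons.mp hch).2
          (fun x hx => hE x (List.mem_cons_of_mem _ hx)) (by simp) ?_ v
        rw [← hl, List.getLast?_cons_cons]
      have hnot : e ∉ (g :: l').toFinset := by
        intro hmem
        have := chain_topo hac (g :: l') e hch hE e (List.mem_toFinset.mp hmem)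
        have := hac e (hE e (by simp))
        omega
      rw [List.toFinset_cons, edgeDelta_insert hnot, htail]
      have hg1 : (if e.2 = v then (1:ℤ) else 0) = if v = g.1 then 1 else 0 := by
        rw [h1]; simp [eq_comm]
      have hs1 : (if e.1 = v then (1:ℤ) else 0) = if v = s then 1 else 0 := by
        rw [hs]; simp [eq_comm]
      rw [hg1, hs1]; ring

private lemma path_cancel {E : Finset (V × V)} {topo : V → ℕ}
    (hac : ∀ e ∈ E, topo e.1 < topo e.2) :
    ∀ (l : List (V × V)), l.Chain' (fun e f => e.2 = f.1) → (∀ f ∈ l, f ∈ E) →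
      ∀ C1 C2 : Finset (V × V), C1 ⊆ l.toFinset → C2 ⊆ l.toFinset →
      (∀ v, edgeDelta C1 v = edgeDelta C2 v) → C1 = C2 := by
  intro l
  induction l with
  | nil =>
    intro _ _ C1 C2 h1 h2 _
    simp only [List.toFinset_nil, subset_empty] at h1 h2
    rw [h1, h2]
  | cons e l ih =>
    intro hch hE C1 C2 h1 h2 hδ
    have hetopo : topo e.1 < topo e.2 := hac e (hE e (by simp))
    have htail : ∀ f ∈ l, topo e.2 ≤ topo f.1 := chain_topo hac l e hch hE
    have key : ∀ C : Finset (V × V), C ⊆ (e :: l).toFinset →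
        edgeDelta C e.1 = -(if e ∈ C then 1 else 0) := by
      intro C hC
      have hin : C.filter (fun f => f.2 = e.1) = ∅ := by
        ext f
        simp only [mem_filter, notMem_empty, iff_false, not_and]
        intro hf hf2
        have hfm := hC hf
        rw [List.toFinset_cons, mem_insert] at hfm
        rcases hfm with rfl | hfm
        · rw [hf2] at hetopo; omega
        · have ha := htail f (List.mem_toFinset.mp hfm)
          have hb := hac f (hE f (List.mem_cons_of_mem _ (List.mem_toFinset.mp hfm)))
          rw [hf2] at hb; omega
      have hout : C.filter (fun f => f.1 = e.1) = if e ∈ C then {e} else ∅ := by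
        ext f
        simp only [mem_filter]
        split
        · next hmem =>
            simp only [mem_singleton]
            constructor
            · rintro ⟨hf, hf1⟩
              have hfm := hC hf
              rw [List.toFinset_cons, mem_insert] at hfm
              rcases hfm with rfl | hfm
              · rfl
              · have ha := htail f (List.mem_toFinset.mp hfm)
                rw [hf1] at ha; omega
            · rintro rfl; exact ⟨hmem, rfl⟩
        · next hmem =>
            simp only [notMem_empty, iff_false, not_and]
            intro hf hf1
            have hfm := hC hf
            rw [List.toFinset_cons, mem_insert] at hfm
            rcases hfm with rfl | hfm
            · exact hmem hf
            · have ha := htail f (List.mem_toFinset.mp hfm)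
              rw [hf1] at ha; omega
      unfold edgeDelta
      rw [hin, hout]
      split <;> simp
    have hmem : (e ∈ C1) ↔ (e ∈ C2) := by
      have k1 := key C1 h1
      have k2 := key C2 h2
      rw [hδ e.1, k2] at k1
      by_cases m1 : e ∈ C1 <;> by_cases m2 : e ∈ C2 <;> simp [m1, m2] at k1 ⊢
    have hch' := (List.isChain_cons.mp hch).2
    have hE' : ∀ f ∈ l, f ∈ E := fun f hf => hE f (List.mem_cons_of_mem _ hf)
    by_cases m : e ∈ C1
    · have m2 : e ∈ C2 := hmem.mp m
      have s1 : C1.erase e ⊆ l.toFinset := by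
        intro x hx
        have hx1 := h1 (mem_of_mem_erase hx)
        rw [List.toFinset_cons, mem_insert] at hx1
        rcases hx1 with rfl | hx1
        · exact absurd rfl (ne_of_mem_erase hx)
        · exact hx1
      have s2 : C2.erase e ⊆ l.toFinset := by
        intro x hx
        have hx1 := h2 (mem_of_mem_erase hx)
        rw [List.toFinset_cons, mem_insert] at hx1
        rcases hx1 with rfl | hx1
        · exact absurd rfl (ne_of_mem_erase hx)
        · exact hx1
      have hδ' : ∀ v, edgeDelta (C1.erase e) v = edgeDelta (C2.erase e) v := by
        intro v
        have i1 : C1 = insert e (C1.erase e) := (insert_erase m).symm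
        have i2 : C2 = insert e (C2.erase e) := (insert_erase m2).symm
        have d1 := edgeDelta_insert (notMem_erase e C1) v
        have d2 := edgeDelta_insert (notMem_erase e C2) v
        rw [← i1] at d1; rw [← i2] at d2
        have := hδ v
        omega
      have := ih hch' hE' (C1.erase e) (C2.erase e) s1 s2 hδ'
      rw [← insert_erase m, ← insert_erase m2, this]
    · have m2 : e ∉ C2 := fun h => m (hmem.mpr h)
      have s1 : C1 ⊆ l.toFinset := by
        intro x hx
        have hx1 := h1 hx
        rw [List.toFinset_cons, mem_insert] at hx1
        rcases hx1 with rfl | hx1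
        · exact absurd hx m
        · exact hx1
      have s2 : C2 ⊆ l.toFinset := by
        intro x hx
        have hx1 := h2 hx
        rw [List.toFinset_cons, mem_insert] at hx1
        rcases hx1 with rfl | hx1
        · exact absurd hx m2
        · exact hx1
      exact ih hch' hE' C1 C2 s1 s2 hδ

/-- Two `s`‑`t` paths with the same set of edges outside a third path coincide. -/
private lemma stpath_sdiff_inj {E : Finset (V × V)} {topo : V → ℕ}
    (hac : ∀ e ∈ E, topo e.1 < topo e.2) {s t : V} {π0 γ1 γ2 : Finset (V × V)}
    (h0 : IsSTPath E s t π0) (hg1 : IsSTPath E s t γ1) (hg2 : IsSTPath E s t γ2)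
    (hd : γ1 \ π0 = γ2 \ π0) : γ1 = γ2 := by
  obtain ⟨l0, hl0f, hl0E, _, hl0ch, _, _⟩ := h0
  obtain ⟨l1, hl1f, hl1E, _, hl1ch, hl1h, hl1l⟩ := hg1
  obtain ⟨l2, hl2f, hl2E, _, hl2ch, hl2h, hl2l⟩ := hg2
  have d1 : ∀ v, edgeDelta γ1 v = (if v = t then 1 else 0) - (if v = s then 1 else 0) := by
    rw [← hl1f]; exact path_delta hac l1 s t hl1ch hl1E hl1h hl1l
  have d2 : ∀ v, edgeDelta γ2 v = (if v = t then 1 else 0) - (if v = s then 1 else 0) := by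
    rw [← hl2f]; exact path_delta hac l2 s t hl2ch hl2E hl2h hl2l
  have split1 : ∀ (γ : Finset (V × V)) (v : V),
      edgeDelta γ v = edgeDelta (γ \ π0) v + edgeDelta (γ ∩ π0) v := by
    intro γ v
    rw [← edgeDelta_union (disjoint_left.mpr (fun a ha hb =>
      (mem_sdiff.mp ha).2 (mem_inter.mp hb).2)) v, sdiff_union_inter]
  have hδ : ∀ v, edgeDelta (γ1 ∩ π0) v = edgeDelta (γ2 ∩ π0) v := by
    intro v
    have e1 := split1 γ1 v
    have e2 := split1 γ2 v
    rw [d1 v] at e1; rw [d2 v] at e2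
    rw [hd] at e1
    omega
  have hC : γ1 ∩ π0 = γ2 ∩ π0 := by
    refine path_cancel hac l0 hl0ch hl0E _ _ ?_ ?_ hδ
    · rw [hl0f]; exact inter_subset_right
    · rw [hl0f]; exact inter_subset_right
  calc γ1 = (γ1 \ π0) ∪ (γ1 ∩ π0) := (sdiff_union_inter _ _).symm
    _ = (γ2 \ π0) ∪ (γ2 ∩ π0) := by rw [hd, hC]
    _ = γ2 := sdiff_union_inter _ _

private lemma sum_mass (q : V × V → ℝ) (F : Finset (V × V)) :
    ∑ x ∈ F.powerset, (∏ e ∈ x, q e) * ∏ e ∈ F \ x, (1 - q e) = 1 := by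
  rw [← Finset.prod_add]
  simp


private lemma sum_powerset_split (F D : Finset (V × V)) (hD : D ⊆ F)
    (f : Finset (V × V) → ℝ) :
    ∑ x ∈ F.powerset, (if D ⊆ x then f x else 0) = ∑ y ∈ (F \ D).powerset, f (y ∪ D) := by
  rw [← Finset.sum_filter]
  refine Finset.sum_bij' (fun x _ => x \ D) (fun y _ => y ∪ D) ?_ ?_ ?_ ?_ ?_
  · intro x hx
    rw [mem_filter, mem_powerset] at hx
    exact mem_powerset.mpr (sdiff_subset_sdiff hx.1 le_rfl)
  · intro y hy
    rw [mem_powerset] at hy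
    rw [mem_filter, mem_powerset]
    exact ⟨union_subset (hy.trans sdiff_subset) hD, subset_union_right⟩
  · intro x hx
    rw [mem_filter] at hx
    exact sdiff_union_of_subset hx.2
  · intro y hy
    rw [mem_powerset] at hy
    show (y ∪ D) \ D = y
    rw [union_sdiff_right,
      sdiff_eq_self_of_disjoint (disjoint_of_subset_left hy sdiff_disjoint)]
  · intro x hx
    rw [mem_filter] at hx
    rw [sdiff_union_of_subset hx.2]

private lemma prod_split_mu (q : V × V → ℝ) {F D : Finset (V × V)} (hD : D ⊆ F)
    {y : Finset (V × V)} (hy : y ⊆ F \ D) :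
    (∏ e ∈ y ∪ D, q e) * ∏ e ∈ F \ (y ∪ D), (1 - q e)
      = (∏ e ∈ D, q e) * ((∏ e ∈ y, q e) * ∏ e ∈ (F \ D) \ y, (1 - q e)) := by
  have hdisj : Disjoint y D := disjoint_of_subset_left hy sdiff_disjoint
  have h1 : ∏ e ∈ y ∪ D, q e = (∏ e ∈ y, q e) * ∏ e ∈ D, q e := Finset.prod_union hdisj
  have h2 : F \ (y ∪ D) = (F \ D) \ y := by
    ext a
    simp only [mem_sdiff, mem_union]
    tauto
  rw [h1, h2]
  ring

private lemma harris' (q : V × V → ℝ) (F D : Finset (V × V))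
    (hq01 : ∀ e ∈ F, 0 ≤ q e ∧ q e ≤ 1) (hD : D ⊆ F) (g : Finset (V × V) → ℝ)
    (hg0 : ∀ x, 0 ≤ g x) (hganti : ∀ x y : Finset (V × V), x ⊆ y → g y ≤ g x) :
    ∑ x ∈ F.powerset, (if D ⊆ x then g x * ((∏ e ∈ x, q e) * ∏ e ∈ F \ x, (1 - q e)) else 0)
      ≤ (∏ e ∈ D, q e) *
        ∑ x ∈ F.powerset, g x * ((∏ e ∈ x, q e) * ∏ e ∈ F \ x, (1 - q e)) := by
  rw [sum_powerset_split F D hD]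
  have l1 : ∑ y ∈ (F \ D).powerset,
        g (y ∪ D) * ((∏ e ∈ y ∪ D, q e) * ∏ e ∈ F \ (y ∪ D), (1 - q e))
      = (∏ e ∈ D, q e) * ∑ y ∈ (F \ D).powerset,
          g (y ∪ D) * ((∏ e ∈ y, q e) * ∏ e ∈ (F \ D) \ y, (1 - q e)) := by
    rw [Finset.mul_sum]
    refine Finset.sum_congr rfl fun y hy => ?_
    rw [prod_split_mu q hD (mem_powerset.mp hy)]
    ring
  rw [l1]
  refine mul_le_mul_of_nonneg_left ?_ (prod_nonneg fun e he => (hq01 e (hD he)).1)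
  have step2 : ∑ y ∈ (F \ D).powerset,
        g (y ∪ D) * ((∏ e ∈ y, q e) * ∏ e ∈ (F \ D) \ y, (1 - q e))
      = ∑ x ∈ F.powerset, g ((x \ D) ∪ D) * ((∏ e ∈ x, q e) * ∏ e ∈ F \ x, (1 - q e)) := by
    have hsplit : ∑ x ∈ F.powerset, g ((x \ D) ∪ D) * ((∏ e ∈ x, q e) * ∏ e ∈ F \ x, (1 - q e))
        = ∑ yz ∈ (F \ D).powerset ×ˢ D.powerset,
            (g (yz.1 ∪ D) * ((∏ e ∈ yz.1, q e) * ∏ e ∈ (F \ D) \ yz.1, (1 - q e))) *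
              ((∏ e ∈ yz.2, q e) * ∏ e ∈ D \ yz.2, (1 - q e)) := by
      refine Finset.sum_bij' (fun x _ => (x \ D, x ∩ D)) (fun yz _ => yz.1 ∪ yz.2)
        ?_ ?_ ?_ ?_ ?_
      · intro x hx
        rw [mem_powerset] at hx
        rw [mem_product, mem_powerset, mem_powerset]
        exact ⟨sdiff_subset_sdiff hx le_rfl, inter_subset_right⟩
      · intro yz hyz
        rw [mem_product, mem_powerset, mem_powerset] at hyz
        exact mem_powerset.mpr (union_subset (hyz.1.trans sdiff_subset) (hyz.2.trans hD))
      · intro x _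
        exact sdiff_union_inter x D
      · intro yz hyz
        rw [mem_product, mem_powerset, mem_powerset] at hyz
        obtain ⟨hyF, hzD⟩ := hyz
        have hyD : Disjoint yz.1 D := disjoint_of_subset_left hyF sdiff_disjoint
        have k1 : (yz.1 ∪ yz.2) \ D = yz.1 := by
          rw [union_sdiff_distrib, sdiff_eq_self_of_disjoint hyD,
            sdiff_eq_empty_iff_subset.mpr hzD, union_empty]
        have k2 : (yz.1 ∪ yz.2) ∩ D = yz.2 := by
          rw [union_inter_distrib_right, (inter_eq_left (s := yz.2)).mpr hzD,
            disjoint_iff_inter_eq_empty.mp hyD, empty_union]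
        show ((yz.1 ∪ yz.2) \ D, (yz.1 ∪ yz.2) ∩ D) = yz
        rw [k1, k2]
      · intro x hx
        rw [mem_powerset] at hx
        have hdisj : Disjoint (x \ D) (x ∩ D) :=
          disjoint_of_subset_right inter_subset_right sdiff_disjoint
        have h1 : (∏ e ∈ x, q e) = (∏ e ∈ x \ D, q e) * ∏ e ∈ x ∩ D, q e := by
          rw [← Finset.prod_union hdisj, sdiff_union_inter]
        have h2 : F \ x = ((F \ D) \ (x \ D)) ∪ (D \ (x ∩ D)) := by
          ext a
          simp only [mem_union, mem_sdiff, mem_inter]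
          have := @hD a
          tauto
        have hdisj2 : Disjoint ((F \ D) \ (x \ D)) (D \ (x ∩ D)) :=
          Disjoint.mono sdiff_subset sdiff_subset sdiff_disjoint
        rw [h1, h2, Finset.prod_union hdisj2]
        ring
    rw [hsplit, Finset.sum_product]
    refine (Finset.sum_congr rfl ?_).symm
    intro y _
    dsimp only
    rw [← Finset.mul_sum, sum_mass q D, mul_one]
  rw [step2]
  refine Finset.sum_le_sum fun x hx => ?_
  refine mul_le_mul_of_nonneg_right (hganti x ((x \ D) ∪ D) ?_) ?_
  · intro a ha
    by_cases haD : a ∈ D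
    · exact mem_union_right _ haD
    · exact mem_union_left _ (mem_sdiff.mpr ⟨ha, haD⟩)
  · rw [mem_powerset] at hx
    refine mul_nonneg (prod_nonneg fun e he => (hq01 e (hx he)).1)
      (prod_nonneg fun e he => ?_)
    have := (hq01 e (mem_sdiff.mp he).1).2
    linarith

/-- Karp–Luby bound: `w(Ω)/w(A) ≤ ∏_{e∈E} (1+q(e))`, where
`w(Ω) = ∑_{a∈A} |P(a)|·w(a)` and `w(A) = ∑_{a∈A} w(a)`. -/
theorem karp_luby_bound
    (E : Finset (V × V)) (s t : V)
    (topo : V → ℕ) (hacyclic : ∀ e ∈ E, topo e.1 < topo e.2)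
    (q : V × V → ℝ) (hq : ∀ e ∈ E, q e ∈ Set.Icc (0:ℝ) 1)
    (Ps : Finset (Finset (V × V))) (hPs : ∀ γ, γ ∈ Ps ↔ IsSTPath E s t γ)
    (A : Finset (Finset (V × V)))
    (hA : ∀ a, a ∈ A ↔ a ⊆ E ∧ ∃ γ ∈ Ps, γ ⊆ a)
    (w : Finset (V × V) → ℝ)
    (hw : ∀ a, w a = (∏ e ∈ a, q e) * ∏ e ∈ E \ a, (1 - q e)) :
    (∑ a ∈ A, ((Ps.filter (fun γ => γ ⊆ a)).card : ℝ) * w a) / (∑ a ∈ A, w a)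
      ≤ ∏ e ∈ E, (1 + q e) := by
  classical
  have hq0 : ∀ e ∈ E, 0 ≤ q e := fun e he => (hq e he).1
  have hq1 : ∀ e ∈ E, q e ≤ 1 := fun e he => (hq e he).2
  have hPsE : ∀ γ ∈ Ps, γ ⊆ E := by
    intro γ hγ
    obtain ⟨l, hlf, hlE, _⟩ := (hPs γ).mp hγ
    intro e he
    rw [← hlf] at he
    exact hlE e (List.mem_toFinset.mp he)
  have hwnn : ∀ a : Finset (V × V), a ⊆ E → 0 ≤ w a := by
    intro a ha
    rw [hw]
    refine mul_nonneg (prod_nonneg fun e he => hq0 e (ha he))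
      (prod_nonneg fun e he => ?_)
    have := hq1 e (mem_sdiff.mp he).1
    linarith
  have hAE : ∀ a ∈ A, a ⊆ E := fun a ha => ((hA a).mp ha).1
  have hApow : A ⊆ E.powerset := fun a ha => mem_powerset.mpr (hAE a ha)
  have hwAnn : 0 ≤ ∑ a ∈ A, w a := sum_nonneg fun a ha => hwnn a (hAE a ha)
  rcases eq_or_lt_of_le hwAnn with h0 | hpos
  · rw [← h0, div_zero]
    exact prod_nonneg fun e he => by have := hq0 e he; linarith
  rw [div_le_iff₀ hpos]
  -- choose a minimal path in each intact state
  obtain ⟨π, hπ⟩ : ∃ π : Finset (V × V) → Finset (V × V),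
      ∀ a ∈ A, (π a ∈ Ps ∧ π a ⊆ a) ∧
        ∀ γ ∈ Ps, γ ⊆ a → ¬ WellOrderingRel γ (π a) := by
    have h : ∀ a : Finset (V × V), ∃ p : Finset (V × V),
        a ∈ A → (p ∈ Ps ∧ p ⊆ a) ∧ ∀ γ ∈ Ps, γ ⊆ a → ¬ WellOrderingRel γ p := by
      intro a
      by_cases ha : a ∈ A
      · obtain ⟨γ0, hγ0, hγ0a⟩ := ((hA a).mp ha).2
        obtain ⟨p, hp, hmin⟩ :=
          (IsWellFounded.wf (r := WellOrderingRel (α := Finset (V × V)))).has_min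
            {γ | γ ∈ Ps ∧ γ ⊆ a} ⟨γ0, hγ0, hγ0a⟩
        exact ⟨p, fun _ => ⟨⟨hp.1, hp.2⟩, fun γ h1 h2 => hmin γ ⟨h1, h2⟩⟩⟩
      · exact ⟨∅, fun h => absurd h ha⟩
    choose π hπ using h
    exact ⟨π, fun a ha => hπ a ha⟩
  -- fiber characterization
  have hfiber : ∀ π0 ∈ Ps, ∀ a : Finset (V × V), (a ∈ A ∧ π a = π0) ↔
      (a ⊆ E ∧ π0 ⊆ a ∧ ∀ γ ∈ Ps, γ ⊆ a → ¬ WellOrderingRel γ π0) := by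
    intro π0 h0 a
    constructor
    · rintro ⟨ha, rfl⟩
      exact ⟨hAE a ha, (hπ a ha).1.2, fun γ h1 h2 => (hπ a ha).2 γ h1 h2⟩
    · rintro ⟨haE, h0a, hmin⟩
      have ha : a ∈ A := (hA a).mpr ⟨haE, π0, h0, h0a⟩
      refine ⟨ha, ?_⟩
      rcases trichotomous_of WellOrderingRel (π a) π0 with h | h | h
      · exact absurd h (hmin _ (hπ a ha).1.1 (hπ a ha).1.2)
      · exact h
      · exact absurd h ((hπ a ha).2 π0 h0 h0a)
  set Cp : Finset (V × V) → Finset (V × V) → Prop :=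
    fun π0 x => ∀ γ' ∈ Ps, γ' ⊆ x ∪ π0 → ¬ WellOrderingRel γ' π0 with hCp
  have hCpmono : ∀ π0, ∀ x y : Finset (V × V), x ⊆ y → Cp π0 y → Cp π0 x := by
    intro π0 x y hxy hy γ' hγ' hsub
    exact hy γ' hγ' (hsub.trans (union_subset_union hxy le_rfl))
  have hfiber2 : ∀ π0 ∈ Ps, ∀ a : Finset (V × V), (a ∈ A ∧ π a = π0) ↔
      (a ⊆ E ∧ Cp π0 (a \ π0) ∧ π0 ⊆ a) := by
    intro π0 h0 a
    rw [hfiber π0 h0 a]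
    constructor
    · rintro ⟨haE, h0a, hmin⟩
      refine ⟨haE, ?_, h0a⟩
      intro γ' hγ' hsub
      rw [sdiff_union_of_subset h0a] at hsub
      exact hmin γ' hγ' hsub
    · rintro ⟨haE, hcp, h0a⟩
      refine ⟨haE, h0a, ?_⟩
      intro γ' hγ' hsub
      refine hcp γ' hγ' ?_
      rw [sdiff_union_of_subset h0a]
      exact hsub
  -- extending sums over A to sums over the powerset of E
  have hAext : ∀ (P : Finset (V × V) → Prop) [DecidablePred P],
      ∑ a ∈ A, (if P a then w a else 0)
        = ∑ a ∈ E.powerset, (if a ∈ A ∧ P a then w a else 0) := by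
    intro P _
    have e1 : ∑ a ∈ A, (if P a then w a else 0)
        = ∑ a ∈ A, (if a ∈ A ∧ P a then w a else 0) :=
      Finset.sum_congr rfl fun a ha => by by_cases h : P a <;> simp [h, ha]
    rw [e1]
    refine Finset.sum_subset hApow fun a _ ha => by simp [ha]
  -- key bound for each pair of paths
  have hkey : ∀ γ ∈ Ps, ∀ π0 ∈ Ps,
      ∑ a ∈ A, (if γ ⊆ a ∧ π a = π0 then w a else 0)
        ≤ (∏ e ∈ γ \ π0, q e) * ∑ a ∈ A, (if π a = π0 then w a else 0) := by
    intro γ hγ π0 h0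
    have h0E : π0 ⊆ E := hPsE π0 h0
    have hγE : γ ⊆ E := hPsE γ hγ
    set g : Finset (V × V) → ℝ := fun x => if Cp π0 x then 1 else 0 with hg
    set F : Finset (V × V) := E \ π0 with hF
    have hgval : ∀ y : Finset (V × V), y ⊆ F →
        g ((y ∪ π0) \ π0) = g y := by
      intro y hy
      have hyd : (y ∪ π0) \ π0 = y := by
        rw [union_sdiff_right, sdiff_eq_self_of_disjoint
          (disjoint_of_subset_left (hy.trans (by rw [hF])) sdiff_disjoint)]
      rw [hyd]
    have hwval : ∀ y : Finset (V × V), y ⊆ F →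
        w (y ∪ π0) = (∏ e ∈ π0, q e) * ((∏ e ∈ y, q e) * ∏ e ∈ F \ y, (1 - q e)) := by
      intro y hy
      rw [hw]
      exact prod_split_mu q h0E (by rw [← hF]; exact hy)
    have lhs1 : ∑ a ∈ A, (if γ ⊆ a ∧ π a = π0 then w a else 0)
        = (∏ e ∈ π0, q e) * ∑ y ∈ F.powerset,
            (if γ \ π0 ⊆ y then g y * ((∏ e ∈ y, q e) * ∏ e ∈ F \ y, (1 - q e)) else 0) := by
      rw [hAext (fun a => γ ⊆ a ∧ π a = π0)]
      have e2 : ∀ a ∈ E.powerset, (if a ∈ A ∧ γ ⊆ a ∧ π a = π0 then w a else 0)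
          = (if π0 ⊆ a then ((if γ ⊆ a then 1 else 0) * g (a \ π0)) * w a else 0) := by
        intro a ha
        rw [mem_powerset] at ha
        have hc : (a ∈ A ∧ γ ⊆ a ∧ π a = π0) ↔ (γ ⊆ a ∧ (Cp π0 (a \ π0) ∧ π0 ⊆ a)) := by
          constructor
          · rintro ⟨h4, h5, h6⟩
            exact ⟨h5, ((hfiber2 π0 h0 a).mp ⟨h4, h6⟩).2⟩
          · rintro ⟨h5, h6⟩
            have h7 := (hfiber2 π0 h0 a).mpr ⟨ha, h6.1, h6.2⟩
            exact ⟨h7.1, h5, h7.2⟩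
        rw [if_congr hc rfl rfl]
        by_cases h1 : π0 ⊆ a <;> by_cases h2 : γ ⊆ a <;> by_cases h3 : Cp π0 (a \ π0) <;>
          simp [hg, h1, h2, h3]
      rw [Finset.sum_congr rfl e2,
        sum_powerset_split E π0 h0E (fun a => ((if γ ⊆ a then 1 else 0) * g (a \ π0)) * w a)]
      have e3 : ∀ y ∈ F.powerset,
          ((if γ ⊆ y ∪ π0 then (1:ℝ) else 0) * g ((y ∪ π0) \ π0)) * w (y ∪ π0)
            = (∏ e ∈ π0, q e) *
              (if γ \ π0 ⊆ y then g y * ((∏ e ∈ y, q e) * ∏ e ∈ F \ y, (1 - q e)) else 0) := by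
        intro y hy
        rw [mem_powerset] at hy
        have hcond : (γ ⊆ y ∪ π0) ↔ (γ \ π0 ⊆ y) := by
          constructor
          · intro h e he
            rcases mem_union.mp (h (mem_sdiff.mp he).1) with h' | h'
            · exact h'
            · exact absurd h' (mem_sdiff.mp he).2
          · intro h e he
            by_cases hh : e ∈ π0
            · exact mem_union_right _ hh
            · exact mem_union_left _ (h (mem_sdiff.mpr ⟨he, hh⟩))
        rw [hgval y hy, hwval y hy]
        by_cases h2 : γ ⊆ y ∪ π0
        · rw [if_pos h2, if_pos (hcond.mp h2)]
          ring
        · rw [if_neg h2, if_neg (fun hh => h2 (hcond.mpr hh))]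
          ring
      rw [Finset.sum_congr rfl e3, ← Finset.mul_sum]
    have rhs1 : ∑ a ∈ A, (if π a = π0 then w a else 0)
        = (∏ e ∈ π0, q e) * ∑ y ∈ F.powerset,
            g y * ((∏ e ∈ y, q e) * ∏ e ∈ F \ y, (1 - q e)) := by
      rw [hAext (fun a => π a = π0)]
      have e2 : ∀ a ∈ E.powerset, (if a ∈ A ∧ π a = π0 then w a else 0)
          = (if π0 ⊆ a then g (a \ π0) * w a else 0) := by
        intro a ha
        rw [mem_powerset] at ha
        have hc : (a ∈ A ∧ π a = π0) ↔ (Cp π0 (a \ π0) ∧ π0 ⊆ a) := by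
          rw [hfiber2 π0 h0 a]
          constructor
          · rintro ⟨_, u, v⟩; exact ⟨u, v⟩
          · rintro ⟨u, v⟩; exact ⟨ha, u, v⟩
        rw [if_congr hc rfl rfl]
        by_cases h1 : π0 ⊆ a <;> by_cases h3 : Cp π0 (a \ π0) <;>
          simp [hg, h1, h3]
      rw [Finset.sum_congr rfl e2,
        sum_powerset_split E π0 h0E (fun a => g (a \ π0) * w a)]
      have e3 : ∀ y ∈ F.powerset, g ((y ∪ π0) \ π0) * w (y ∪ π0)
          = (∏ e ∈ π0, q e) * (g y * ((∏ e ∈ y, q e) * ∏ e ∈ F \ y, (1 - q e))) := by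
        intro y hy
        rw [mem_powerset] at hy
        rw [hgval y hy, hwval y hy]
        ring
      rw [Finset.sum_congr rfl e3, ← Finset.mul_sum]
    rw [lhs1, rhs1]
    have hq01' : ∀ e ∈ F, 0 ≤ q e ∧ q e ≤ 1 := by
      intro e he
      have heE : e ∈ E := by
        rw [hF] at he
        exact (mem_sdiff.mp he).1
      exact ⟨hq0 e heE, hq1 e heE⟩
    have hDsub : γ \ π0 ⊆ F := by
      rw [hF]
      exact sdiff_subset_sdiff hγE le_rfl
    have hg0 : ∀ x, 0 ≤ g x := by
      intro x
      rw [hg]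
      dsimp only
      split <;> norm_num
    have hganti : ∀ x y : Finset (V × V), x ⊆ y → g y ≤ g x := by
      intro x y hxy
      rw [hg]
      dsimp only
      by_cases h : Cp π0 y
      · rw [if_pos h, if_pos (hCpmono π0 x y hxy h)]
      · rw [if_neg h]
        split <;> norm_num
    have hh := harris' q F (γ \ π0) hq01' hDsub g hg0 hganti
    have hπ0nn : 0 ≤ ∏ e ∈ π0, q e := prod_nonneg fun e he => hq0 e (h0E he)
    exact le_trans (mul_le_mul_of_nonneg_left hh hπ0nn) (le_of_eq (by ring))
  -- numerator rearrangement
  have hnum : ∑ a ∈ A, ((Ps.filter (fun γ => γ ⊆ a)).card : ℝ) * w a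
      = ∑ γ ∈ Ps, ∑ a ∈ A, (if γ ⊆ a then w a else 0) := by
    have hterm : ∀ a : Finset (V × V), ((Ps.filter (fun γ => γ ⊆ a)).card : ℝ) * w a
        = ∑ γ ∈ Ps, if γ ⊆ a then w a else 0 := by
      intro a
      rw [← Finset.sum_filter, Finset.sum_const, nsmul_eq_mul]
    calc ∑ a ∈ A, ((Ps.filter (fun γ => γ ⊆ a)).card : ℝ) * w a
        = ∑ a ∈ A, ∑ γ ∈ Ps, if γ ⊆ a then w a else 0 :=
          Finset.sum_congr rfl fun a _ => hterm a
      _ = ∑ γ ∈ Ps, ∑ a ∈ A, if γ ⊆ a then w a else 0 := Finset.sum_comm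
  -- fiberwise decompositions
  have hfib1 : ∀ γ : Finset (V × V), ∑ a ∈ A, (if γ ⊆ a then w a else 0)
      = ∑ π0 ∈ Ps, ∑ a ∈ A, (if γ ⊆ a ∧ π a = π0 then w a else 0) := by
    intro γ
    calc ∑ a ∈ A, (if γ ⊆ a then w a else 0)
        = ∑ π0 ∈ Ps, ∑ a ∈ A.filter (fun a => π a = π0), (if γ ⊆ a then w a else 0) :=
          (Finset.sum_fiberwise_of_maps_to (fun a ha => (hπ a ha).1.1) _).symm
      _ = ∑ π0 ∈ Ps, ∑ a ∈ A, (if γ ⊆ a ∧ π a = π0 then w a else 0) := by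
          refine Finset.sum_congr rfl fun π0 _ => ?_
          rw [Finset.sum_filter]
          refine Finset.sum_congr rfl fun a _ => ?_
          by_cases h1 : γ ⊆ a <;> by_cases h2 : π a = π0 <;> simp [h1, h2]
  have hfib0 : ∑ a ∈ A, w a = ∑ π0 ∈ Ps, ∑ a ∈ A, (if π a = π0 then w a else 0) := by
    calc ∑ a ∈ A, w a
        = ∑ π0 ∈ Ps, ∑ a ∈ A.filter (fun a => π a = π0), w a :=
          (Finset.sum_fiberwise_of_maps_to (fun a ha => (hπ a ha).1.1) _).symm
      _ = ∑ π0 ∈ Ps, ∑ a ∈ A, (if π a = π0 then w a else 0) :=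
          Finset.sum_congr rfl fun π0 _ => Finset.sum_filter _ _
  have hP0 : ∀ π0 : Finset (V × V), 0 ≤ ∑ a ∈ A, (if π a = π0 then w a else 0) := by
    intro π0
    refine sum_nonneg fun a ha => ?_
    by_cases h : π a = π0
    · rw [if_pos h]
      exact hwnn a (hAE a ha)
    · rw [if_neg h]
  -- injectivity bound
  have hinj : ∀ π0 ∈ Ps, ∑ γ ∈ Ps, ∏ e ∈ γ \ π0, q e ≤ ∏ e ∈ E, (1 + q e) := by
    intro π0 h0
    have h1 : ∑ S ∈ Ps.image (fun γ => γ \ π0), ∏ e ∈ S, q e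
        = ∑ γ ∈ Ps, ∏ e ∈ γ \ π0, q e := by
      refine Finset.sum_image ?_
      intro γ1 hγ1 γ2 hγ2 hEq
      exact stpath_sdiff_inj hacyclic ((hPs π0).mp h0) ((hPs γ1).mp hγ1)
        ((hPs γ2).mp hγ2) hEq
    rw [← h1]
    have h2 : Ps.image (fun γ => γ \ π0) ⊆ E.powerset := by
      intro S hS
      obtain ⟨γ', hγ', rfl⟩ := mem_image.mp hS
      exact mem_powerset.mpr (sdiff_subset.trans (hPsE γ' hγ'))
    calc ∑ S ∈ Ps.image (fun γ => γ \ π0), ∏ e ∈ S, q e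
        ≤ ∑ S ∈ E.powerset, ∏ e ∈ S, q e := by
          refine Finset.sum_le_sum_of_subset_of_nonneg h2 ?_
          intro S hS _
          exact prod_nonneg fun e he => hq0 e (mem_powerset.mp hS he)
      _ = ∏ e ∈ E, (q e + 1) := by
          rw [Finset.prod_add]
          simp
      _ = ∏ e ∈ E, (1 + q e) := Finset.prod_congr rfl fun e _ => add_comm _ _
  -- put everything together
  calc ∑ a ∈ A, ((Ps.filter (fun γ => γ ⊆ a)).card : ℝ) * w a
      = ∑ γ ∈ Ps, ∑ a ∈ A, (if γ ⊆ a then w a else 0) := hnum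
    _ = ∑ γ ∈ Ps, ∑ π0 ∈ Ps, ∑ a ∈ A, (if γ ⊆ a ∧ π a = π0 then w a else 0) :=
        Finset.sum_congr rfl fun γ _ => hfib1 γ
    _ ≤ ∑ γ ∈ Ps, ∑ π0 ∈ Ps,
          (∏ e ∈ γ \ π0, q e) * ∑ a ∈ A, (if π a = π0 then w a else 0) :=
        Finset.sum_le_sum fun γ hγ => Finset.sum_le_sum fun π0 h0 => hkey γ hγ π0 h0
    _ = ∑ π0 ∈ Ps, (∑ γ ∈ Ps, ∏ e ∈ γ \ π0, q e) *
          ∑ a ∈ A, (if π a = π0 then w a else 0) := by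
        rw [Finset.sum_comm]
        exact Finset.sum_congr rfl fun π0 _ => (Finset.sum_mul _ _ _).symm
    _ ≤ ∑ π0 ∈ Ps, (∏ e ∈ E, (1 + q e)) *
          ∑ a ∈ A, (if π a = π0 then w a else 0) :=
        Finset.sum_le_sum fun π0 h0 =>
          mul_le_mul_of_nonneg_right (hinj π0 h0) (hP0 π0)
    _ = (∏ e ∈ E, (1 + q e)) * ∑ a ∈ A, w a := by
        rw [← Finset.mul_sum, ← hfib0]
end

section
/- Let a ⊆ E be an intact state in a directed acyclic graph, obtained as a = γ ∪ {e₁,…,e_k} where γ is an s-t path and e₁,…,e_k are distinct edges added in order. Define M_{e_i} = 1/2 if both endpoints of e_i are covered by edges of γ ∪ {e₁,…,e_{i−1}}, and M_{e_i} = 1 otherwise. Then 1/|P(a)| ≥ ∏_{i=1}^k M_{e_i}. -/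
variable {V : Type*} [Fintype V] [DecidableEq V]

/-- A vertex `v` is saturated (covered) by an edge set `b` if it is an
endpoint of some edge of `b`. -/
def Saturated (b : Finset (V × V)) (v : V) : Prop :=
  ∃ e ∈ b, e.1 = v ∨ e.2 = v

namespace PathAux



set_option linter.unusedSectionVars false

variable {topo : V → ℕ}

lemma chainPairwise : ∀ {l : List (V × V)},
    l.Chain' (fun p q => p.2 = q.1) →
    (∀ p ∈ l, topo p.1 < topo p.2) →
    l.Pairwise (fun p q => topo p.1 < topo q.1 ∧ topo p.2 < topo q.2) := by
  intro l
  induction l with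
  | nil => intro _ _; exact List.Pairwise.nil
  | cons p rest ih =>
    intro hc hE
    rw [List.Chain', List.isChain_cons] at hc
    have hrest := ih hc.2 (fun q hq => hE q (List.mem_cons_of_mem _ hq))
    refine List.pairwise_cons.2 ⟨?_, hrest⟩
    intro q hq
    match rest, hq, hc, hrest with
    | y :: r, hq, hc, hrest =>
      have hpy : p.2 = y.1 := hc.1 y rfl
      have hpy' : topo p.2 = topo y.1 := by rw [hpy]
      have hpE := hE p (List.mem_cons_self)
      have hyE := hE y (List.mem_cons_of_mem _ (List.mem_cons_self))
      rcases List.mem_cons.1 hq with rfl | hq'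
      · constructor <;> omega
      · have := (List.pairwise_cons.1 hrest).1 q hq'
        constructor <;> omega

lemma uniq_src {l : List (V × V)}
    (hc : l.Chain' (fun p q => p.2 = q.1))
    (hE : ∀ p ∈ l, topo p.1 < topo p.2)
    {p q : V × V} (hp : p ∈ l) (hq : q ∈ l) (h : p.1 = q.1) : p = q := by
  have hpw := (chainPairwise hc hE).imp
    (fun h => Or.inl h :
      ∀ {p q : V × V}, (topo p.1 < topo q.1 ∧ topo p.2 < topo q.2) →
      ((topo p.1 < topo q.1 ∧ topo p.2 < topo q.2) ∨ (topo q.1 < topo p.1 ∧ topo q.2 < topo p.2)))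
  by_contra hne
  have := @List.Pairwise.forall _ _ _ ⟨fun _ _ h => h.symm⟩ hpw _ hp _ hq hne
  rw [h] at this
  rcases this with ⟨h1, _⟩ | ⟨h1, _⟩ <;> omega

lemma uniq_tgt {l : List (V × V)}
    (hc : l.Chain' (fun p q => p.2 = q.1))
    (hE : ∀ p ∈ l, topo p.1 < topo p.2)
    {p q : V × V} (hp : p ∈ l) (hq : q ∈ l) (h : p.2 = q.2) : p = q := by
  have hpw := (chainPairwise hc hE).imp
    (fun h => Or.inl h :
      ∀ {p q : V × V}, (topo p.1 < topo q.1 ∧ topo p.2 < topo q.2) →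
      ((topo p.1 < topo q.1 ∧ topo p.2 < topo q.2) ∨ (topo q.1 < topo p.1 ∧ topo q.2 < topo p.2)))
  by_contra hne
  have := @List.Pairwise.forall _ _ _ ⟨fun _ _ h => h.symm⟩ hpw _ hp _ hq hne
  rw [h] at this
  rcases this with ⟨_, h2⟩ | ⟨_, h2⟩ <;> omega

lemma enters : ∀ {l : List (V × V)} {s : V},
    l.Chain' (fun p q => p.2 = q.1) →
    l.head?.map Prod.fst = some s →
    ∀ p ∈ l, p.1 = s ∨ ∃ f ∈ l, f.2 = p.1 := by
  intro l
  induction l with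
  | nil => simp
  | cons y rest ih =>
    intro s hc hh p hp
    have hys : y.1 = s := by simpa using hh
    rcases List.mem_cons.1 hp with rfl | hp'
    · exact Or.inl hys
    · match rest, hp', hc with
      | z :: r, hp', hc =>
        have hyz : y.2 = z.1 := (List.isChain_cons_cons.1 hc).1
        have := ih (s := z.1) (List.isChain_cons_cons.1 hc).2 (by simp) p hp'
        rcases this with h | ⟨f, hf, hf2⟩
        · exact Or.inr ⟨y, List.mem_cons_self, by rw [hyz, ← h]⟩
        · exact Or.inr ⟨f, List.mem_cons_of_mem _ hf, hf2⟩

lemma leaves : ∀ {l : List (V × V)} {t : V},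
    l.Chain' (fun p q => p.2 = q.1) →
    l.getLast?.map Prod.snd = some t →
    ∀ p ∈ l, p.2 = t ∨ ∃ f ∈ l, f.1 = p.2 := by
  intro l
  induction l with
  | nil => simp
  | cons y rest ih =>
    intro t hc hlast p hp
    match rest, hp, hc, hlast with
    | [], hp, _, hlast =>
      have : y.2 = t := by simpa using hlast
      rcases List.mem_cons.1 hp with rfl | h
      · exact Or.inl this
      · simp at h
    | z :: r, hp, hc, hlast =>
      have hyz : y.2 = z.1 := (List.isChain_cons_cons.1 hc).1
      have hlast' : (z :: r).getLast?.map Prod.snd = some t := by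
        rwa [List.getLast?_cons_cons] at hlast
      rcases List.mem_cons.1 hp with rfl | hp'
      · exact Or.inr ⟨z, List.mem_cons_of_mem _ (List.mem_cons_self), hyz.symm⟩
      · rcases ih (List.isChain_cons_cons.1 hc).2 hlast' p hp' with h | ⟨f, hf, hf1⟩
        · exact Or.inl h
        · exact Or.inr ⟨f, List.mem_cons_of_mem _ hf, hf1⟩

lemma src_ge : ∀ {l : List (V × V)} {s : V},
    l.Chain' (fun p q => p.2 = q.1) →
    (∀ p ∈ l, topo p.1 < topo p.2) →
    l.head?.map Prod.fst = some s →
    ∀ p ∈ l, topo s ≤ topo p.1 := by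
  intro l
  induction l with
  | nil => simp
  | cons y rest ih =>
    intro s hc hE hh p hp
    have hys : y.1 = s := by simpa using hh
    rcases List.mem_cons.1 hp with rfl | hp'
    · rw [hys]
    · match rest, hp', hc with
      | z :: r, hp', hc =>
        have hyz : y.2 = z.1 := (List.isChain_cons_cons.1 hc).1
        have hyz' : topo y.2 = topo z.1 := by rw [hyz]
        have h1 := ih (s := z.1) (List.isChain_cons_cons.1 hc).2
          (fun q hq => hE q (List.mem_cons_of_mem _ hq)) (by simp) p hp'
        have h2 := hE y (List.mem_cons_self)
        rw [← hys]
        omega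

lemma tgt_le : ∀ {l : List (V × V)} {t : V},
    l.Chain' (fun p q => p.2 = q.1) →
    (∀ p ∈ l, topo p.1 < topo p.2) →
    l.getLast?.map Prod.snd = some t →
    ∀ p ∈ l, topo p.2 ≤ topo t := by
  intro l
  induction l with
  | nil => simp
  | cons y rest ih =>
    intro t hc hE hlast p hp
    match rest, hp, hc, hlast with
    | [], hp, _, hlast =>
      have : y.2 = t := by simpa using hlast
      rcases List.mem_cons.1 hp with rfl | h
      · rw [this]
      · simp at h
    | z :: r, hp, hc, hlast =>
      have hyz : y.2 = z.1 := (List.isChain_cons_cons.1 hc).1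
      have hyz' : topo y.2 = topo z.1 := by rw [hyz]
      have hlast' : (z :: r).getLast?.map Prod.snd = some t := by
        rwa [List.getLast?_cons_cons] at hlast
      have ih' := ih (List.isChain_cons_cons.1 hc).2
        (fun q hq => hE q (List.mem_cons_of_mem _ hq)) hlast'
      rcases List.mem_cons.1 hp with rfl | hp'
      · have h1 := ih' z (List.mem_cons_self)
        have h2 := hE z (List.mem_cons_of_mem _ (List.mem_cons_self))
        omega
      · exact ih' p hp'



section Key

variable {topo : V → ℕ} {E : Finset (V × V)} {s t : V}

/-- Any edge of `a` incident to a vertex unsaturated by `b` must be `e j` with `i ≤ j`. -/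
lemma incident_unsat {γ : Finset (V × V)} {k : ℕ} {e : Fin k → V × V}
    {a : Finset (V × V)} (ha : a = γ ∪ Finset.image e Finset.univ)
    {i : Fin k} {b : Finset (V × V)} (hγb : γ ⊆ b)
    (hjb : ∀ j : Fin k, j < i → e j ∈ b)
    {u : V} (hu : ¬ Saturated b u)
    {g : V × V} (hg : g ∈ a) (hend : g.1 = u ∨ g.2 = u) :
    ∃ j : Fin k, i ≤ j ∧ g = e j := by
  rw [ha, Finset.mem_union] at hg
  rcases hg with hg | hg
  · exact absurd ⟨g, hγb hg, hend⟩ hu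
  · obtain ⟨j, -, rfl⟩ := Finset.mem_image.1 hg
    refine ⟨j, ?_, rfl⟩
    by_contra hlt
    exact hu ⟨e j, hjb j (lt_of_not_ge hlt), hend⟩

lemma key_diff (hacyclic : ∀ p ∈ E, topo p.1 < topo p.2)
    {γ : Finset (V × V)} {k : ℕ} {e : Fin k → V × V}
    {a : Finset (V × V)} (ha : a = γ ∪ Finset.image e Finset.univ)
    {δ δ' : Finset (V × V)} (hδ : IsSTPath E s t δ) (hδ' : IsSTPath E s t δ')
    (hδa : δ ⊆ a) (hδ'a : δ' ⊆ a)
    {i : Fin k} {b : Finset (V × V)} (hγb : γ ⊆ b)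
    (hjb : ∀ j : Fin k, j < i → e j ∈ b)
    (hns : ¬ (Saturated b (e i).1 ∧ Saturated b (e i).2))
    (hiδ : e i ∈ δ) (hiδ' : e i ∉ δ')
    (hagree : ∀ j, i < j → (e j ∈ δ ↔ e j ∈ δ')) : False := by
  obtain ⟨l, hlf, hlE, hne, hch, hhd, hlt⟩ := hδ
  obtain ⟨l', hlf', hlE', hne', hch', hhd', hlt'⟩ := hδ'
  have hmem : ∀ x : V × V, x ∈ δ ↔ x ∈ l := fun x => by rw [← hlf, List.mem_toFinset]
  have hmem' : ∀ x : V × V, x ∈ δ' ↔ x ∈ l' := fun x => by rw [← hlf', List.mem_toFinset]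
  have hEl : ∀ p ∈ l, topo p.1 < topo p.2 := fun p hp => hacyclic p (hlE p hp)
  have hEl' : ∀ p ∈ l', topo p.1 < topo p.2 := fun p hp => hacyclic p (hlE' p hp)
  have hil : e i ∈ l := (hmem _).1 hiδ
  have hitopo : topo (e i).1 < topo (e i).2 := hEl _ hil
  rcases not_and_or.1 hns with hu | hu
  · -- first endpoint (e i).1 unsaturated
    have hut : (e i).1 ≠ t := by
      intro h
      have h1 := tgt_le (topo := topo) hch hEl hlt (e i) hil
      have h2 : topo (e i).1 = topo t := by rw [h]
      omega
    have hg' : ∃ g' ∈ δ', g'.1 = (e i).1 := by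
      by_cases hus : (e i).1 = s
      · match l', hne', hhd' with
        | y :: r', _, hhd' =>
          have hy : y.1 = s := by simpa using hhd'
          exact ⟨y, (hmem' y).2 (List.mem_cons_self), by rw [hy, hus]⟩
      · rcases enters hch hhd (e i) hil with h | ⟨f, hf, hf2⟩
        · exact absurd h hus
        · have hfδ : f ∈ δ := (hmem f).2 hf
          have hfne : f ≠ e i := by
            intro h; rw [h] at hf2
            have := congrArg topo hf2; omega
          obtain ⟨j, hij, rfl⟩ :=
            incident_unsat ha hγb hjb hu (hδa hfδ) (Or.inr hf2)
          have hij' : i < j := lt_of_le_of_ne hij (fun h => hfne (by rw [h]))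
          have hjδ' : e j ∈ δ' := (hagree j hij').1 hfδ
          rcases leaves hch' hlt' (e j) ((hmem' _).1 hjδ') with h | ⟨g', hg', hg1⟩
          · exact absurd (hf2 ▸ h) hut
          · exact ⟨g', (hmem' g').2 hg', by rw [hg1, hf2]⟩
    obtain ⟨g', hg'δ', hg'1⟩ := hg'
    have hg'ne : g' ≠ e i := fun h => hiδ' (h ▸ hg'δ')
    obtain ⟨m, him, rfl⟩ :=
      incident_unsat ha hγb hjb hu (hδ'a hg'δ') (Or.inl hg'1)
    have him' : i < m := lt_of_le_of_ne him (fun h => hg'ne (by rw [h]))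
    have hmδ : e m ∈ δ := (hagree m him').2 hg'δ'
    exact hg'ne (uniq_src hch hEl ((hmem _).1 hmδ) hil hg'1)
  · -- second endpoint (e i).2 unsaturated
    have hus : (e i).2 ≠ s := by
      intro h
      have h1 := src_ge (topo := topo) hch hEl hhd (e i) hil
      have h2 : topo (e i).2 = topo s := by rw [h]
      omega
    have hg' : ∃ g' ∈ δ', g'.2 = (e i).2 := by
      by_cases hut : (e i).2 = t
      · match l', hne', hlt' with
        | y :: r', _, hlt' =>
          obtain ⟨z, hz, hz2⟩ : ∃ z ∈ (y :: r'), z.2 = t := by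
            have h := List.getLast?_eq_getLast (l := y :: r') (by simp)
            rw [h] at hlt'
            exact ⟨(y :: r').getLast (by simp), List.getLast_mem _, by simpa using hlt'⟩
          exact ⟨z, (hmem' z).2 hz, by rw [hz2, hut]⟩
      · rcases leaves hch hlt (e i) hil with h | ⟨f, hf, hf1⟩
        · exact absurd h hut
        · have hfδ : f ∈ δ := (hmem f).2 hf
          have hfne : f ≠ e i := by
            intro h; rw [h] at hf1
            have := congrArg topo hf1; omega
          obtain ⟨j, hij, rfl⟩ :=
            incident_unsat ha hγb hjb hu (hδa hfδ) (Or.inl hf1)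
          have hij' : i < j := lt_of_le_of_ne hij (fun h => hfne (by rw [h]))
          have hjδ' : e j ∈ δ' := (hagree j hij').1 hfδ
          rcases enters hch' hhd' (e j) ((hmem' _).1 hjδ') with h | ⟨g', hg', hg2⟩
          · exact absurd (hf1 ▸ h) hus
          · exact ⟨g', (hmem' g').2 hg', by rw [hg2, hf1]⟩
    obtain ⟨g', hg'δ', hg'2⟩ := hg'
    have hg'ne : g' ≠ e i := fun h => hiδ' (h ▸ hg'δ')
    obtain ⟨m, him, rfl⟩ :=
      incident_unsat ha hγb hjb hu (hδ'a hg'δ') (Or.inr hg'2)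
    have him' : i < m := lt_of_le_of_ne him (fun h => hg'ne (by rw [h]))
    have hmδ : e m ∈ δ := (hagree m him').2 hg'δ'
    exact hg'ne (uniq_tgt hch hEl ((hmem _).1 hmδ) hil hg'2)

lemma key2 (hacyclic : ∀ p ∈ E, topo p.1 < topo p.2)
    {γ : Finset (V × V)} (hγ : IsSTPath E s t γ)
    {k : ℕ} {e : Fin k → V × V}
    {a : Finset (V × V)} (ha : a = γ ∪ Finset.image e Finset.univ)
    {δ δ' : Finset (V × V)} (hδ : IsSTPath E s t δ) (hδ' : IsSTPath E s t δ')
    (hδa : δ ⊆ a) (hδ'a : δ' ⊆ a)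
    {g : V × V} (hgδ : g ∈ δ) (hgδ' : g ∉ δ')
    (hee : ∀ j, e j ∈ δ ↔ e j ∈ δ')
    (hmin : ∀ f : V × V, ((f ∈ δ ∧ f ∉ δ') ∨ (f ∈ δ' ∧ f ∉ δ)) → topo g.1 ≤ topo f.1) :
    False := by
  obtain ⟨lγ, hlfγ, hlEγ, hneγ, hchγ, hhdγ, hltγ⟩ := hγ
  obtain ⟨l, hlf, hlE, hne, hch, hhd, hlt⟩ := hδ
  obtain ⟨l', hlf', hlE', hne', hch', hhd', hlt'⟩ := hδ'
  have hmemγ : ∀ x : V × V, x ∈ γ ↔ x ∈ lγ := fun x => by rw [← hlfγ, List.mem_toFinset]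
  have hmem : ∀ x : V × V, x ∈ δ ↔ x ∈ l := fun x => by rw [← hlf, List.mem_toFinset]
  have hmem' : ∀ x : V × V, x ∈ δ' ↔ x ∈ l' := fun x => by rw [← hlf', List.mem_toFinset]
  have hElγ : ∀ p ∈ lγ, topo p.1 < topo p.2 := fun p hp => hacyclic p (hlEγ p hp)
  have hEl : ∀ p ∈ l, topo p.1 < topo p.2 := fun p hp => hacyclic p (hlE p hp)
  have hEl' : ∀ p ∈ l', topo p.1 < topo p.2 := fun p hp => hacyclic p (hlE' p hp)
  have hgl : g ∈ l := (hmem _).1 hgδ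
  have hgtopo : topo g.1 < topo g.2 := hEl _ hgl
  -- g is a γ-edge
  have hnotim : ∀ x : V × V, x ∈ δ ∧ x ∉ δ' ∨ x ∈ δ' ∧ x ∉ δ → x ∈ γ := by
    intro x hx
    have hxa : x ∈ a := by rcases hx with ⟨h1, _⟩ | ⟨h1, _⟩; exacts [hδa h1, hδ'a h1]
    rw [ha, Finset.mem_union] at hxa
    rcases hxa with h | h
    · exact h
    · obtain ⟨j, -, rfl⟩ := Finset.mem_image.1 h
      rcases hx with ⟨h1, h2⟩ | ⟨h1, h2⟩
      · exact absurd ((hee j).1 h1) h2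
      · exact absurd ((hee j).2 h1) h2
  have hgγ : g ∈ γ := hnotim g (Or.inl ⟨hgδ, hgδ'⟩)
  have hut : g.1 ≠ t := by
    intro h
    have h1 := tgt_le (topo := topo) hch hEl hlt g hgl
    have h2 : topo g.1 = topo t := by rw [h]
    omega
  -- find g'' ∈ δ' leaving g.1
  have hg'' : ∃ g'' ∈ δ', g''.1 = g.1 := by
    by_cases hus : g.1 = s
    · match l', hne', hhd' with
      | y :: r', _, hhd' =>
        have hy : y.1 = s := by simpa using hhd'
        exact ⟨y, (hmem' y).2 (List.mem_cons_self), by rw [hy, hus]⟩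
    · rcases enters hch hhd g hgl with h | ⟨f, hf, hf2⟩
      · exact absurd h hus
      · have hfδ : f ∈ δ := (hmem f).2 hf
        have hfδ' : f ∈ δ' := by
          by_contra hfn
          have := hmin f (Or.inl ⟨hfδ, hfn⟩)
          have h2 : topo f.2 = topo g.1 := by rw [hf2]
          have h3 := hEl f hf
          omega
        rcases leaves hch' hlt' f ((hmem' _).1 hfδ') with h | ⟨g'', hg'', hg1⟩
        · exact absurd (hf2 ▸ h) hut
        · exact ⟨g'', (hmem' g'').2 hg'', by rw [hg1, hf2]⟩
  obtain ⟨g'', hg''δ', hg''1⟩ := hg''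
  have hg''ne : g'' ≠ g := fun h => hgδ' (h ▸ hg''δ')
  have hg''nδ : g'' ∉ δ := by
    intro h
    exact hg''ne (uniq_src hch hEl ((hmem _).1 h) hgl hg''1)
  have hg''γ : g'' ∈ γ := hnotim g'' (Or.inr ⟨hg''δ', hg''nδ⟩)
  exact hg''ne (uniq_src hchγ hElγ ((hmemγ _).1 hg''γ) ((hmemγ _).1 hgγ) hg''1)

end Key
end PathAux


open scoped Classical in
/-- Lemma 1 of the paper: for an intact state `a = γ ∪ {e₁,…,e_k}` obtained from an
`s`-`t` path `γ` by adding distinct edges `e₁,…,e_k` in order, with multiplicities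
`M_{e_i} = 1/2` if both endpoints of `e_i` are already saturated and `1` otherwise,
we have `1/|P(a)| ≥ ∏ M_{e_i}`. -/
theorem inv_card_paths_ge_prod_multiplicities
    (E : Finset (V × V)) (s t : V)
    (topo : V → ℕ) (hacyclic : ∀ e ∈ E, topo e.1 < topo e.2)
    (Ps : Finset (Finset (V × V))) (hPs : ∀ γ, γ ∈ Ps ↔ IsSTPath E s t γ)
    (γ : Finset (V × V)) (hγ : IsSTPath E s t γ)
    (k : ℕ) (e : Fin k → V × V) (hinj : Function.Injective e)
    (he : ∀ i, e i ∈ E \ γ)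
    (a : Finset (V × V)) (ha : a = γ ∪ Finset.image e Finset.univ)
    (M : Fin k → ℝ)
    (hM : ∀ i, M i =
      if Saturated (γ ∪ Finset.image e (Finset.univ.filter (fun j => j < i))) (e i).1 ∧
         Saturated (γ ∪ Finset.image e (Finset.univ.filter (fun j => j < i))) (e i).2
      then (1/2 : ℝ) else 1) :
    ((Ps.filter (fun γ' => γ' ⊆ a)).card : ℝ)⁻¹ ≥ ∏ i, M i := by
  classical
  set b : Fin k → Finset (V × V) :=
    fun i => γ ∪ Finset.image e (Finset.univ.filter (fun j => j < i)) with hb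
  set cond : Fin k → Prop :=
    fun i => Saturated (b i) (e i).1 ∧ Saturated (b i) (e i).2 with hcond
  have hM' : ∀ i, M i = if cond i then (1/2 : ℝ) else 1 := by
    intro i
    rw [hM i]
  set H : Finset (Fin k) := Finset.univ.filter cond with hH
  have hprod : ∏ i, M i = (1/2 : ℝ) ^ H.card := by
    rw [Finset.prod_congr rfl (fun i _ => hM' i), ← Finset.prod_filter, Finset.prod_const]
  -- properties of b
  have hγb : ∀ i, γ ⊆ b i := fun i => Finset.subset_union_left
  have hjb : ∀ i, ∀ j : Fin k, j < i → e j ∈ b i := by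
    intro i j hj
    exact Finset.mem_union_right _ (Finset.mem_image.2 ⟨j, by simp [hj], rfl⟩)
  -- injectivity of the half-edge trace
  set Φ : Finset (V × V) → Finset (Fin k) := fun δ => H.filter (fun i => e i ∈ δ) with hΦ
  set PA := Ps.filter (fun γ' => γ' ⊆ a) with hPA
  have hPAmem : ∀ δ ∈ PA, IsSTPath E s t δ ∧ δ ⊆ a := by
    intro δ hδ
    rw [hPA, Finset.mem_filter] at hδ
    exact ⟨(hPs δ).1 hδ.1, hδ.2⟩
  have hinjOn : Set.InjOn Φ PA := by
    intro δ hδmem δ' hδ'mem hΦeq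
    obtain ⟨hδpath, hδa⟩ := hPAmem δ hδmem
    obtain ⟨hδ'path, hδ'a⟩ := hPAmem δ' hδ'mem
    have hiff : ∀ i, cond i → (e i ∈ δ ↔ e i ∈ δ') := by
      intro i hc
      have := Finset.ext_iff.1 hΦeq i
      rw [hΦ] at this
      simp only [Finset.mem_filter, hH, Finset.mem_univ, true_and] at this
      constructor
      · intro h; exact (this.1 ⟨hc, h⟩).2
      · intro h; exact (this.2 ⟨hc, h⟩).2
    by_contra hne
    by_cases hcase : ∀ j, e j ∈ δ ↔ e j ∈ δ'
    · -- differ on a γ-edge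
      have hDne : ((δ \ δ') ∪ (δ' \ δ)).Nonempty := by
        by_contra hD
        rw [Finset.not_nonempty_iff_eq_empty] at hD
        apply hne
        ext x
        constructor
        · intro hx
          by_contra hx'
          have : x ∈ (δ \ δ') ∪ (δ' \ δ) :=
            Finset.mem_union_left _ (Finset.mem_sdiff.2 ⟨hx, hx'⟩)
          simp [hD] at this
        · intro hx
          by_contra hx'
          have : x ∈ (δ \ δ') ∪ (δ' \ δ) :=
            Finset.mem_union_right _ (Finset.mem_sdiff.2 ⟨hx, hx'⟩)
          simp [hD] at this
      obtain ⟨g, hgD, hgmin⟩ :=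
        Finset.exists_min_image _ (fun f => topo f.1) hDne
      have hmin : ∀ f : V × V, ((f ∈ δ ∧ f ∉ δ') ∨ (f ∈ δ' ∧ f ∉ δ)) →
          topo g.1 ≤ topo f.1 := by
        intro f hf
        apply hgmin
        rcases hf with ⟨h1, h2⟩ | ⟨h1, h2⟩
        · exact Finset.mem_union_left _ (Finset.mem_sdiff.2 ⟨h1, h2⟩)
        · exact Finset.mem_union_right _ (Finset.mem_sdiff.2 ⟨h1, h2⟩)
      rcases Finset.mem_union.1 hgD with hg | hg
      · rcases Finset.mem_sdiff.1 hg with ⟨h1, h2⟩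
        exact PathAux.key2 hacyclic hγ ha hδpath hδ'path hδa hδ'a h1 h2 hcase hmin
      · rcases Finset.mem_sdiff.1 hg with ⟨h1, h2⟩
        exact PathAux.key2 hacyclic hγ ha hδ'path hδpath hδ'a hδa h1 h2
          (fun j => (hcase j).symm)
          (fun f hf => hmin f (Or.symm hf))
    · -- differ on an e-edge: take the largest index
      rw [not_forall] at hcase
      have hSne : (Finset.univ.filter (fun j : Fin k => ¬(e j ∈ δ ↔ e j ∈ δ'))).Nonempty := by
        obtain ⟨j, hj⟩ := hcase
        exact ⟨j, Finset.mem_filter.2 ⟨Finset.mem_univ _, hj⟩⟩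
      obtain ⟨i, hiS, himax⟩ :=
        Finset.exists_max_image _ (fun j : Fin k => j) hSne
      have hniff : ¬(e i ∈ δ ↔ e i ∈ δ') := by
        have := Finset.mem_filter.1 hiS
        exact this.2
      have hagree : ∀ j, i < j → (e j ∈ δ ↔ e j ∈ δ') := by
        intro j hj
        by_contra hj'
        have := himax j (Finset.mem_filter.2 ⟨Finset.mem_univ _, hj'⟩)
        exact absurd hj (not_lt.2 this)
      have hncond : ¬ cond i := fun hc => hniff (hiff i hc)
      by_cases hin : e i ∈ δ
      · have hin' : e i ∉ δ' := fun h => hniff ⟨fun _ => h, fun _ => hin⟩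
        exact PathAux.key_diff hacyclic ha hδpath hδ'path hδa hδ'a (hγb i) (hjb i)
          hncond hin hin' hagree
      · have hin' : e i ∈ δ' := by
          by_contra h
          exact hniff ⟨fun h' => absurd h' hin, fun h' => absurd h' h⟩
        exact PathAux.key_diff hacyclic ha hδ'path hδpath hδ'a hδa (hγb i) (hjb i)
          hncond hin' hin (fun j hj => (hagree j hj).symm)
  have hmaps : ∀ δ ∈ PA, Φ δ ∈ H.powerset := by
    intro δ _
    exact Finset.mem_powerset.2 (Finset.filter_subset _ _)
  have hcard : PA.card ≤ 2 ^ H.card := by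
    calc PA.card ≤ H.powerset.card := Finset.card_le_card_of_injOn Φ hmaps hinjOn
      _ = 2 ^ H.card := Finset.card_powerset H
  have hpos : 0 < PA.card := by
    apply Finset.card_pos.2
    refine ⟨γ, ?_⟩
    rw [hPA, Finset.mem_filter]
    exact ⟨(hPs γ).2 hγ, ha ▸ Finset.subset_union_left⟩
  rw [hprod, ge_iff_le]
  have hc0 : (0 : ℝ) < (PA.card : ℝ) := by exact_mod_cast hpos
  have hle : (PA.card : ℝ) ≤ (2 : ℝ) ^ H.card := by exact_mod_cast hcard
  calc (1/2 : ℝ) ^ H.card = 1 / (2 : ℝ) ^ H.card := by rw [one_div, inv_pow, one_div]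
    _ ≤ 1 / (PA.card : ℝ) := one_div_le_one_div_of_le hc0 hle
    _ = ((PA.card : ℝ))⁻¹ := one_div _
end

section
/- Let a be an edge set in a directed acyclic graph containing an s-t path, partition a = F^1 ∪ F^{1/2} such that F^1 is acyclic as an undirected edge set (every undirected cycle of a contains an edge of F^{1/2}). Then for every subset H ⊆ F^{1/2}, there is at most one s-t path in a that contains all edges of H and no edge of F^{1/2} \ H; consequently the number of s-t paths in a is at most 2^{|F^{1/2}|}. -/
variable {V : Type*} [Fintype V] [DecidableEq V]

namespace STPathAux

open List

set_option linter.unusedSectionVars false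

section General

variable {α : Type*}

/-- consecutive pairs of a list -/
def pairs (p : List α) : List (α × α) := p.zip p.tail

lemma pairs_cons_cons (a b : α) (l : List α) :
    pairs (a :: b :: l) = (a, b) :: pairs (b :: l) := rfl

lemma head_mem_pairs (a b : α) (l : List α) : (a, b) ∈ pairs (a :: b :: l) := by
  rw [pairs_cons_cons]; exact mem_cons_self

lemma mem_fst_of_pairs {x y : α} {p : List α} (h : (x, y) ∈ pairs p) : x ∈ p :=
  (List.of_mem_zip h).1

lemma mem_snd_of_pairs {x y : α} {p : List α} (h : (x, y) ∈ pairs p) : y ∈ p :=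
  mem_of_mem_tail (List.of_mem_zip h).2

lemma pairs_subset_cons (a : α) (l : List α) : pairs l ⊆ pairs (a :: l) := by
  cases l with
  | nil => intro e he; simp [pairs] at he
  | cons b l' => rw [pairs_cons_cons]; exact subset_cons_self _ _

lemma pairs_subset_append_left : ∀ (pre q : List α), pairs q ⊆ pairs (pre ++ q)
  | [], q => by simp
  | a :: pre', q => List.Subset.trans (pairs_subset_append_left pre' q) (pairs_subset_cons a _)

lemma pairs_subset_append_right : ∀ (q post : List α), pairs q ⊆ pairs (q ++ post)
  | [], _ => by intro e he; simp [pairs] at he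
  | [a], _ => by intro e he; simp [pairs] at he
  | a :: b :: q', post => by
      intro e he
      rw [pairs_cons_cons] at he
      rcases mem_cons.mp he with rfl | he
      · show (a, b) ∈ pairs (a :: b :: (q' ++ post))
        exact head_mem_pairs _ _ _
      · show e ∈ pairs (a :: (b :: q' ++ post))
        exact pairs_subset_cons a _ (pairs_subset_append_right (b :: q') post he)

lemma fst_mem_of_pairs_concat : ∀ {l : List α} {z x y : α}, (x, y) ∈ pairs (l ++ [z]) → x ∈ l
  | [], z, x, y => by intro h; simp [pairs] at h
  | a :: l', z, x, y => by
      cases l' with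
      | nil =>
          intro h
          have : (x, y) = (a, z) := by simpa [pairs] using h
          rw [Prod.mk.injEq] at this
          simp [this.1]
      | cons b l'' =>
          intro h
          rw [show (a :: b :: l'') ++ [z] = a :: b :: (l'' ++ [z]) from rfl,
            pairs_cons_cons] at h
          rcases mem_cons.mp h with h | h
          · rw [Prod.mk.injEq] at h; simp [h.1]
          · exact mem_cons_of_mem _ (fst_mem_of_pairs_concat h)

lemma pairs_snd_unique : ∀ {p : List α}, p.Nodup → ∀ {x y₁ y₂ : α},
    (x, y₁) ∈ pairs p → (x, y₂) ∈ pairs p → y₁ = y₂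
  | [], _, _, _, _, h, _ => by simp [pairs] at h
  | [a], _, _, _, _, h, _ => by simp [pairs] at h
  | a :: b :: p', hnd, x, y₁, y₂, h₁, h₂ => by
      rw [pairs_cons_cons] at h₁ h₂
      have hna : a ∉ b :: p' := (nodup_cons.mp hnd).1
      rcases mem_cons.mp h₁ with h₁ | h₁ <;> rcases mem_cons.mp h₂ with h₂ | h₂
      · rw [Prod.mk.injEq] at h₁ h₂; rw [h₁.2, h₂.2]
      · rw [Prod.mk.injEq] at h₁
        exact absurd (h₁.1 ▸ mem_fst_of_pairs h₂) hna
      · rw [Prod.mk.injEq] at h₂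
        exact absurd (h₂.1 ▸ mem_fst_of_pairs h₁) hna
      · exact pairs_snd_unique (nodup_cons.mp hnd).2 h₁ h₂

lemma chain'_of_pairs {R : α → α → Prop} : ∀ {p : List α},
    (∀ x y, (x, y) ∈ pairs p → R x y) → p.Chain' R
  | [], _ => List.isChain_nil
  | [a], _ => List.IsChain.singleton a
  | a :: b :: p', h => List.isChain_cons_cons.mpr
      ⟨h a b (head_mem_pairs _ _ _),
       chain'_of_pairs (fun x y hxy => h x y (pairs_subset_cons _ _ hxy))⟩

lemma exists_lcp : ∀ (p₁ p₂ : List α), p₁.head? = p₂.head? → p₁ ≠ p₂ →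
    ∃ c r₁ r₂, p₁ = c ++ r₁ ∧ p₂ = c ++ r₂ ∧ c ≠ [] ∧ r₁.head? ≠ r₂.head?
  | [], p₂, hh, hne => by
      cases p₂ with
      | nil => exact absurd rfl hne
      | cons b q => simp at hh
  | a :: q₁, p₂, hh, hne => by
      cases p₂ with
      | nil => simp at hh
      | cons b q₂ =>
        simp only [head?_cons, Option.some.injEq] at hh
        subst hh
        by_cases h : q₁.head? = q₂.head?
        · have hq : q₁ ≠ q₂ := fun e => hne (by rw [e])
          obtain ⟨c, r₁, r₂, e₁, e₂, hc, hr⟩ := exists_lcp q₁ q₂ h hq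
          exact ⟨a :: c, r₁, r₂, by simp [e₁], by simp [e₂], by simp, hr⟩
        · exact ⟨[a], q₁, q₂, rfl, rfl, by simp, h⟩

end General

lemma exists_walk (G : SimpleGraph V) : ∀ (q : List V) (x u : V),
    (∀ a b : V, (a, b) ∈ pairs (x :: (q ++ [u])) → G.Adj a b) →
    ∃ w : G.Walk x u, w.support = x :: (q ++ [u])
  | [], x, u, h => ⟨.cons (h x u (head_mem_pairs x u [])) .nil, by simp⟩
  | b :: q', x, u, h => by
      obtain ⟨w, hw⟩ := exists_walk G q' b u
        (fun a c hac => h a c (pairs_subset_cons x _ hac))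
      refine ⟨.cons (h x b ?_) w, by simp [hw]⟩
      exact head_mem_pairs x b (q' ++ [u])

lemma pairs_of_pathList : ∀ (l : List (V × V)) (t : V), l.Chain' (fun e f => e.2 = f.1) →
    l.getLast?.map Prod.snd = some t → pairs (l.map Prod.fst ++ [t]) = l
  | [], t, _, h => by simp at h
  | [e], t, _, h => by
      simp only [getLast?_singleton, Option.map_some, Option.some.injEq] at h
      show pairs [e.1, t] = [e]
      simp [pairs, ← h]
  | e :: f :: l', t, hc, h => by
      have h1 : e.2 = f.1 := (List.isChain_cons_cons.mp hc).1
      have ih := pairs_of_pathList (f :: l') t (List.isChain_cons_cons.mp hc).2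
        (by simpa using h)
      show pairs (e.1 :: f.1 :: (l'.map Prod.fst ++ [t])) = e :: f :: l'
      rw [pairs_cons_cons]
      rw [show (f.1 :: (l'.map Prod.fst ++ [t])) = (f :: l').map Prod.fst ++ [t] from rfl, ih]
      rw [← h1]

lemma exists_vertexList {a : Finset (V × V)} {s t : V} {γ : Finset (V × V)}
    (h : IsSTPath a s t γ) :
    ∃ p : List V, γ = (pairs p).toFinset ∧ (∀ e ∈ pairs p, e ∈ a) ∧
      p.head? = some s ∧ p.getLast? = some t := by
  obtain ⟨l, hlγ, hla, hne, hchain, hhead, hlast⟩ := h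
  have hp := pairs_of_pathList l t hchain hlast
  refine ⟨l.map Prod.fst ++ [t], by rw [hp, hlγ], by rw [hp]; exact hla, ?_, ?_⟩
  · cases l with
    | nil => exact absurd rfl hne
    | cons e l' =>
        simp only [head?_cons, Option.map_some, Option.some.injEq] at hhead
        simp [hhead]
  · simp

lemma key {E : Finset (V × V)} {s t : V} {topo : V → ℕ}
    (hacyclic : ∀ e ∈ E, topo e.1 < topo e.2)
    {a : Finset (V × V)} (haE : a ⊆ E)
    {F1 Fhalf : Finset (V × V)} (hpart : F1 ∪ Fhalf = a)
    (hforest : (SimpleGraph.fromRel (fun v w => ((v, w) : V × V) ∈ F1)).IsAcyclic)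
    {γ₁ γ₂ : Finset (V × V)} (h₁ : IsSTPath a s t γ₁) (h₂ : IsSTPath a s t γ₂)
    (hH : γ₁ ∩ Fhalf = γ₂ ∩ Fhalf) : γ₁ = γ₂ := by
  classical
  obtain ⟨p₁, hγ₁, hpa₁, hh₁, hl₁⟩ := exists_vertexList h₁
  obtain ⟨p₂, hγ₂, hpa₂, hh₂, hl₂⟩ := exists_vertexList h₂
  have htrans : IsTrans V (fun x y => topo x < topo y) := ⟨fun _ _ _ => Nat.lt_trans⟩
  have mkpw : ∀ p : List V, (∀ e ∈ pairs p, e ∈ a) →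
      p.Pairwise (fun x y => topo x < topo y) := fun p hpa =>
    (@List.isChain_iff_pairwise _ (fun x y => topo x < topo y) p ⟨fun h1 h2 => Nat.lt_trans h1 h2⟩).mp
      (chain'_of_pairs (fun x y hxy => hacyclic _ (haE (hpa _ hxy))))
  have hpw₁ := mkpw p₁ hpa₁
  have hpw₂ := mkpw p₂ hpa₂
  have hnd₁ : p₁.Nodup := hpw₁.imp fun h => fun hxy => by subst hxy; omega
  have hnd₂ : p₂.Nodup := hpw₂.imp fun h => fun hxy => by subst hxy; omega
  by_contra hne
  have hpne : p₁ ≠ p₂ := fun e => hne (by rw [hγ₁, hγ₂, e])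
  obtain ⟨c, r₁, r₂, e₁, e₂, hcne, hr⟩ := exists_lcp p₁ p₂ (by rw [hh₁, hh₂]) hpne
  have hlast_mem : ∀ (p r : List V), p = c ++ r → p.getLast? = some t → r ≠ [] → t ∈ r := by
    intro p r hp hlast hr0
    rw [hp, List.getLast?_append_of_ne_nil _ hr0] at hlast
    exact List.mem_of_mem_getLast? (by simp [hlast])
  have hrne : r₁ ≠ [] ∧ r₂ ≠ [] := by
    constructor
    · intro h0
      have hr2 : r₂ ≠ [] := by intro h0'; rw [h0, h0'] at hr; exact hr rfl
      have ht2 : t ∈ r₂ := hlast_mem p₂ r₂ e₂ hl₂ hr2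
      have ht1 : t ∈ c := by
        rw [e₁, h0, List.append_nil] at hl₁
        exact List.mem_of_mem_getLast? (by simp [hl₁])
      have := (List.pairwise_append.mp (e₂ ▸ hpw₂)).2.2 t ht1 t ht2
      omega
    · intro h0
      have hr1 : r₁ ≠ [] := by intro h0'; rw [h0, h0'] at hr; exact hr rfl
      have ht1 : t ∈ r₁ := hlast_mem p₁ r₁ e₁ hl₁ hr1
      have ht2 : t ∈ c := by
        rw [e₂, h0, List.append_nil] at hl₂
        exact List.mem_of_mem_getLast? (by simp [hl₂])
      have := (List.pairwise_append.mp (e₁ ▸ hpw₁)).2.2 t ht2 t ht1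
      omega
  obtain ⟨w₁, r₁', hw₁r⟩ := List.exists_cons_of_ne_nil hrne.1
  obtain ⟨w₂, r₂', hw₂r⟩ := List.exists_cons_of_ne_nil hrne.2
  have hw : w₁ ≠ w₂ := by rw [hw₁r, hw₂r] at hr; simpa using hr
  obtain ⟨c', v, hcv⟩ : ∃ c' v, c = c' ++ [v] :=
    ⟨c.dropLast, c.getLast hcne, (List.dropLast_append_getLast hcne).symm⟩
  have ht₁ : t ∈ r₁ := hlast_mem p₁ r₁ e₁ hl₁ hrne.1
  have ht₂ : t ∈ r₂ := hlast_mem p₂ r₂ e₂ hl₂ hrne.2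
  -- take/drop in r₁ at first vertex lying on r₂
  set P₁ : V → Bool := fun x => decide (x ∉ r₂) with hP₁
  have hd₁ne : r₁.dropWhile P₁ ≠ [] := by
    intro h0
    have := (List.dropWhile_eq_nil_iff).mp h0 t ht₁
    rw [hP₁] at this
    simp only [decide_eq_true_eq] at this
    exact this ht₂
  set u : V := (r₁.dropWhile P₁).head hd₁ne with hu
  have hu₂ : u ∈ r₂ := by
    have h2 := List.head_dropWhile_not P₁ hd₁ne
    exact not_not.mp (of_decide_eq_false h2)
  set q₁ : List V := r₁.takeWhile P₁ with hq₁def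
  set d₁' : List V := (r₁.dropWhile P₁).tail with hd₁'def
  have hr₁eq : r₁ = q₁ ++ u :: d₁' := by
    conv_lhs => rw [← List.takeWhile_append_dropWhile (p := P₁) (l := r₁)]
    rw [← List.cons_head_tail hd₁ne]
  have hq₁r₂ : ∀ x ∈ q₁, x ∉ r₂ := by
    intro x hx
    have := List.mem_takeWhile_imp hx
    rw [hP₁] at this
    simpa using this
  -- take/drop in r₂ at u
  set P₂ : V → Bool := fun x => decide (x ≠ u) with hP₂
  have hd₂ne : r₂.dropWhile P₂ ≠ [] := by
    intro h0
    have := (List.dropWhile_eq_nil_iff).mp h0 u hu₂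
    rw [hP₂] at this
    simp at this
  have hu₂head : (r₂.dropWhile P₂).head hd₂ne = u := by
    have h2 := List.head_dropWhile_not P₂ hd₂ne
    exact not_not.mp (of_decide_eq_false h2)
  set q₂ : List V := r₂.takeWhile P₂ with hq₂def
  set d₂' : List V := (r₂.dropWhile P₂).tail with hd₂'def
  have hr₂eq : r₂ = q₂ ++ u :: d₂' := by
    conv_lhs => rw [← List.takeWhile_append_dropWhile (p := P₂) (l := r₂)]
    rw [← List.cons_head_tail hd₂ne, hu₂head]
  have hq₂u : ∀ x ∈ q₂, x ≠ u := by
    intro x hx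
    have := List.mem_takeWhile_imp hx
    rw [hP₂] at this
    simpa using this
  -- heads of the two branches
  have hheadA : ∃ restA, q₁ ++ [u] = w₁ :: restA := by
    cases hq : q₁ with
    | nil =>
        rw [hq] at hr₁eq
        rw [hw₁r] at hr₁eq
        simp only [List.nil_append] at hr₁eq
        exact ⟨[], by rw [List.nil_append, (List.cons.injEq _ _ _ _).mp hr₁eq |>.1]⟩
    | cons x l =>
        rw [hq, hw₁r] at hr₁eq
        simp only [List.cons_append] at hr₁eq
        exact ⟨l ++ [u], by
          rw [List.cons_append, ((List.cons.injEq _ _ _ _).mp hr₁eq).1]⟩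
  have hheadB : ∃ restB, q₂ ++ [u] = w₂ :: restB := by
    cases hq : q₂ with
    | nil =>
        rw [hq] at hr₂eq
        rw [hw₂r] at hr₂eq
        simp only [List.nil_append] at hr₂eq
        exact ⟨[], by rw [List.nil_append, (List.cons.injEq _ _ _ _).mp hr₂eq |>.1]⟩
    | cons x l =>
        rw [hq, hw₂r] at hr₂eq
        simp only [List.cons_append] at hr₂eq
        exact ⟨l ++ [u], by
          rw [List.cons_append, ((List.cons.injEq _ _ _ _).mp hr₂eq).1]⟩
  -- structure of p₁, p₂
  have hp₁A : p₁ = c' ++ ((v :: (q₁ ++ [u])) ++ d₁') := by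
    rw [e₁, hcv, hr₁eq]; simp
  have hp₂B : p₂ = c' ++ ((v :: (q₂ ++ [u])) ++ d₂') := by
    rw [e₂, hcv, hr₂eq]; simp
  have hpairsA : pairs (v :: (q₁ ++ [u])) ⊆ pairs p₁ := by
    rw [hp₁A]
    exact List.Subset.trans (pairs_subset_append_right _ _) (pairs_subset_append_left _ _)
  have hpairsB : pairs (v :: (q₂ ++ [u])) ⊆ pairs p₂ := by
    rw [hp₂B]
    exact List.Subset.trans (pairs_subset_append_right _ _) (pairs_subset_append_left _ _)
  have hsubA : (v :: (q₁ ++ [u])) <+ p₁ := by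
    rw [hp₁A]
    exact (List.sublist_append_left _ d₁').trans (List.sublist_append_right c' _)
  have hsubB : (v :: (q₂ ++ [u])) <+ p₂ := by
    rw [hp₂B]
    exact (List.sublist_append_left _ d₂').trans (List.sublist_append_right c' _)
  have hndA : (v :: (q₁ ++ [u])).Nodup := hnd₁.sublist hsubA
  have hndB : (v :: (q₂ ++ [u])).Nodup := hnd₂.sublist hsubB
  -- pairwise topo facts
  have hpw₁' : (c' ++ ([v] ++ r₁)).Pairwise (fun x y => topo x < topo y) := by
    rw [← List.append_assoc, ← hcv, ← e₁]; exact hpw₁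
  have hpw₂' : (c' ++ ([v] ++ r₂)).Pairwise (fun x y => topo x < topo y) := by
    rw [← List.append_assoc, ← hcv, ← e₂]; exact hpw₂
  have Hc'₁ := (List.pairwise_append.mp hpw₁').2.2
  have Hc'₂ := (List.pairwise_append.mp hpw₂').2.2
  have Hvr₁ : ∀ y ∈ r₁, topo v < topo y := fun y hy =>
    (List.pairwise_append.mp (List.pairwise_append.mp hpw₁').2.1).2.2 v (by simp) y hy
  have Hvr₂ : ∀ y ∈ r₂, topo v < topo y := fun y hy =>
    (List.pairwise_append.mp (List.pairwise_append.mp hpw₂').2.1).2.2 v (by simp) y hy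
  have hpwr₁ : r₁.Pairwise (fun x y => topo x < topo y) :=
    (List.pairwise_append.mp (List.pairwise_append.mp hpw₁').2.1).2.1
  have hpwr₂ : r₂.Pairwise (fun x y => topo x < topo y) :=
    (List.pairwise_append.mp (List.pairwise_append.mp hpw₂').2.1).2.1
  rw [hr₁eq] at hpwr₁
  rw [hr₂eq] at hpwr₂
  have Hq₁u : ∀ x ∈ q₁, topo x < topo u := fun x hx =>
    (List.pairwise_append.mp hpwr₁).2.2 x hx u List.mem_cons_self
  have Hud₁ : ∀ x ∈ d₁', topo u < topo x := fun x hx =>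
    (List.pairwise_cons.mp (List.pairwise_append.mp hpwr₁).2.1).1 x hx
  have Hq₂u : ∀ x ∈ q₂, topo x < topo u := fun x hx =>
    (List.pairwise_append.mp hpwr₂).2.2 x hx u List.mem_cons_self
  -- unique successors of v
  have hsucc₁ : (v, w₁) ∈ pairs p₁ := by
    have hshape : p₁ = c' ++ (v :: w₁ :: r₁') := by rw [e₁, hcv, hw₁r]; simp
    rw [hshape]
    exact pairs_subset_append_left _ _ (head_mem_pairs _ _ _)
  have hsucc₂ : (v, w₂) ∈ pairs p₂ := by
    have hshape : p₂ = c' ++ (v :: w₂ :: r₂') := by rw [e₂, hcv, hw₂r]; simp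
    rw [hshape]
    exact pairs_subset_append_left _ _ (head_mem_pairs _ _ _)
  have hq₁sub : q₁ ⊆ r₁ := by rw [hr₁eq]; exact List.subset_append_left _ _
  have hq₂sub : q₂ ⊆ r₂ := by rw [hr₂eq]; exact List.subset_append_left _ _
  -- the two branches consist of edges in γ₁ \ γ₂ resp. γ₂ \ γ₁
  have claimA : ∀ x y : V, (x, y) ∈ pairs (v :: (q₁ ++ [u])) →
      (x, y) ∈ γ₁ ∧ (x, y) ∉ γ₂ := by
    intro x y hxy
    have hmem₁ : (x, y) ∈ pairs p₁ := hpairsA hxy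
    refine ⟨by rw [hγ₁]; exact List.mem_toFinset.mpr hmem₁, ?_⟩
    intro hin₂
    have hmem₂ : (x, y) ∈ pairs p₂ := List.mem_toFinset.mp (by rw [← hγ₂]; exact hin₂)
    have hx : x ∈ v :: q₁ :=
      fst_mem_of_pairs_concat (show (x, y) ∈ pairs ((v :: q₁) ++ [u]) from hxy)
    rcases List.mem_cons.mp hx with rfl | hxq
    · have hy₂ : y = w₂ := pairs_snd_unique hnd₂ hmem₂ hsucc₂
      obtain ⟨restA, hrA⟩ := hheadA
      have hyA : y = w₁ := pairs_snd_unique hndA hxy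
        (by rw [hrA]; exact head_mem_pairs _ _ _)
      exact hw (by rw [← hyA, hy₂])
    · have hxr₂ : x ∉ r₂ := hq₁r₂ x hxq
      have hxp₂ : x ∈ p₂ := mem_fst_of_pairs hmem₂
      rw [e₂] at hxp₂
      rcases List.mem_append.mp hxp₂ with hxc | hxr
      · rw [hcv] at hxc
        rcases List.mem_append.mp hxc with hxc' | hxv
        · have := Hc'₁ x hxc' x (List.mem_append_right _ (hq₁sub hxq))
          omega
        · have hxveq : x = v := by simpa using hxv
          have := Hvr₁ x (hq₁sub hxq)
          rw [hxveq] at this; omega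
      · exact hxr₂ hxr
  have claimB : ∀ x y : V, (x, y) ∈ pairs (v :: (q₂ ++ [u])) →
      (x, y) ∈ γ₂ ∧ (x, y) ∉ γ₁ := by
    intro x y hxy
    have hmem₂ : (x, y) ∈ pairs p₂ := hpairsB hxy
    refine ⟨by rw [hγ₂]; exact List.mem_toFinset.mpr hmem₂, ?_⟩
    intro hin₁
    have hmem₁ : (x, y) ∈ pairs p₁ := List.mem_toFinset.mp (by rw [← hγ₁]; exact hin₁)
    have hx : x ∈ v :: q₂ :=
      fst_mem_of_pairs_concat (show (x, y) ∈ pairs ((v :: q₂) ++ [u]) from hxy)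
    rcases List.mem_cons.mp hx with rfl | hxq
    · have hy₁ : y = w₁ := pairs_snd_unique hnd₁ hmem₁ hsucc₁
      obtain ⟨restB, hrB⟩ := hheadB
      have hyB : y = w₂ := pairs_snd_unique hndB hxy
        (by rw [hrB]; exact head_mem_pairs _ _ _)
      exact hw (by rw [← hy₁, hyB])
    · have hxne : x ≠ u := hq₂u x hxq
      have hxlt : topo x < topo u := Hq₂u x hxq
      have hxp₁ : x ∈ p₁ := mem_fst_of_pairs hmem₁
      rw [e₁] at hxp₁
      rcases List.mem_append.mp hxp₁ with hxc | hxr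
      · rw [hcv] at hxc
        rcases List.mem_append.mp hxc with hxc' | hxv
        · have := Hc'₂ x hxc' x (List.mem_append_right _ (hq₂sub hxq))
          omega
        · have hxveq : x = v := by simpa using hxv
          have := Hvr₂ x (hq₂sub hxq)
          rw [hxveq] at this; omega
      · rw [hr₁eq] at hxr
        rcases List.mem_append.mp hxr with hxq₁ | hxu
        · exact hq₁r₂ x hxq₁ (hq₂sub hxq)
        · rcases List.mem_cons.mp hxu with rfl | hxd
          · exact hxne rfl
          · have := Hud₁ x hxd; omega
  -- edges outside the common Fhalf part are in F1, hence adjacency in the forest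
  set G := SimpleGraph.fromRel (fun v w => ((v, w) : V × V) ∈ F1) with hGdef
  have hF : ∀ x y : V, (x, y) ∈ a → (x, y) ∉ Fhalf → G.Adj x y := by
    intro x y hxa hout
    have hlt : topo x < topo y := hacyclic _ (haE hxa)
    have hne' : x ≠ y := fun e => by rw [e] at hlt; omega
    have hinF1 : (x, y) ∈ F1 := by
      have : (x, y) ∈ F1 ∪ Fhalf := hpart ▸ hxa
      rcases Finset.mem_union.mp this with h | h
      · exact h
      · exact absurd h hout
    exact (SimpleGraph.fromRel_adj _ _ _).mpr ⟨hne', Or.inl hinF1⟩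
  have hF1 : ∀ x y : V, (x, y) ∈ γ₁ → (x, y) ∉ γ₂ → G.Adj x y := by
    intro x y hin hout
    refine hF x y (hpa₁ _ (List.mem_toFinset.mp (by rw [← hγ₁]; exact hin))) ?_
    intro hhalf
    have : (x, y) ∈ γ₁ ∩ Fhalf := Finset.mem_inter.mpr ⟨hin, hhalf⟩
    rw [hH] at this
    exact hout (Finset.mem_inter.mp this).1
  have hF2 : ∀ x y : V, (x, y) ∈ γ₂ → (x, y) ∉ γ₁ → G.Adj x y := by
    intro x y hin hout
    refine hF x y (hpa₂ _ (List.mem_toFinset.mp (by rw [← hγ₂]; exact hin))) ?_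
    intro hhalf
    have : (x, y) ∈ γ₂ ∩ Fhalf := Finset.mem_inter.mpr ⟨hin, hhalf⟩
    rw [← hH] at this
    exact hout (Finset.mem_inter.mp this).1
  -- two distinct paths from v to u in the forest: contradiction
  obtain ⟨wA, hwA⟩ := exists_walk G q₁ v u
    (fun x y hxy => hF1 x y (claimA x y hxy).1 (claimA x y hxy).2)
  obtain ⟨wB, hwB⟩ := exists_walk G q₂ v u
    (fun x y hxy => hF2 x y (claimB x y hxy).1 (claimB x y hxy).2)
  have hpA : wA.IsPath := (SimpleGraph.Walk.isPath_def wA).mpr (by rw [hwA]; exact hndA)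
  have hpB : wB.IsPath := (SimpleGraph.Walk.isPath_def wB).mpr (by rw [hwB]; exact hndB)
  have heq := hforest.path_unique (⟨wA, hpA⟩ : G.Path v u) ⟨wB, hpB⟩
  have hweq : wA = wB := congrArg Subtype.val heq
  have hsup : v :: (q₁ ++ [u]) = v :: (q₂ ++ [u]) := by rw [← hwA, ← hwB, hweq]
  obtain ⟨restA, hrA⟩ := hheadA
  obtain ⟨restB, hrB⟩ := hheadB
  rw [hrA, hrB] at hsup
  injection hsup with _ hsup'
  injection hsup' with hww _
  exact hw hww

end STPathAux

/-- Key proposition in the proof of Lemma 1: if the edges of an intact state `a` are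
partitioned into `F1 ∪ Fhalf` with `F1` acyclic as an undirected edge set, then each
subset `H ⊆ Fhalf` determines at most one `s`-`t` path in `a`; consequently the number
of `s`-`t` paths in `a` is at most `2^|Fhalf|`. -/
theorem paths_determined_by_half_edges
    (E : Finset (V × V)) (s t : V)
    (topo : V → ℕ) (hacyclic : ∀ e ∈ E, topo e.1 < topo e.2)
    (a : Finset (V × V)) (haE : a ⊆ E) (hintact : ∃ γ, IsSTPath a s t γ)
    (F1 Fhalf : Finset (V × V)) (hpart : F1 ∪ Fhalf = a) (hdisj : Disjoint F1 Fhalf)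
    (hforest : (SimpleGraph.fromRel (fun v w => ((v, w) : V × V) ∈ F1)).IsAcyclic)
    (Pa : Finset (Finset (V × V))) (hPa : ∀ γ, γ ∈ Pa ↔ IsSTPath a s t γ) :
    (∀ H ⊆ Fhalf, ∀ γ₁ γ₂ : Finset (V × V),
        IsSTPath a s t γ₁ → IsSTPath a s t γ₂ →
        γ₁ ∩ Fhalf = H → γ₂ ∩ Fhalf = H → γ₁ = γ₂) ∧
      Pa.card ≤ 2 ^ Fhalf.card := by
  constructor
  · intro H _ γ₁ γ₂ h1 h2 he1 he2
    exact STPathAux.key hacyclic haE hpart hforest h1 h2 (by rw [he1, he2])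
  · have hmaps : ∀ γ ∈ Pa, γ ∩ Fhalf ∈ Fhalf.powerset :=
      fun γ _ => Finset.mem_powerset.mpr Finset.inter_subset_right
    calc Pa.card ≤ Fhalf.powerset.card := by
          refine Finset.card_le_card_of_injOn (· ∩ Fhalf) hmaps ?_
          intro γ₁ hγ₁ γ₂ hγ₂ he
          exact STPathAux.key hacyclic haE hpart hforest
            ((hPa _).mp hγ₁) ((hPa _).mp hγ₂) he
      _ = 2 ^ Fhalf.card := Finset.card_powerset _
end

section
/- If M₁,…,M_k are random variables with values in {1/2, 1} such that for each i, almost surely P(M_i = 1/2 ∣ M₁,…,M_{i−1}) ≤ min{1, μ(2i+l−1)/m}, then E[∏_{i=1}^k M_i] ≥ ∏_{i=1}^k max{1/2, 1 − μ(2i+l−1)/(2m)}. -/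
open MeasureTheory

private lemma integrable_of_bdd {Ω : Type*} {mΩ : MeasurableSpace Ω} {P : Measure Ω}
    [IsFiniteMeasure P] {f : Ω → ℝ} (hf : Measurable f) {C : ℝ} (h : ∀ ω, |f ω| ≤ C) :
    Integrable f P :=
  ⟨hf.aestronglyMeasurable, HasFiniteIntegral.of_bounded (ae_of_all _ h)⟩

private lemma aux_key {Ω : Type*} [mΩ : MeasurableSpace Ω] (P : Measure Ω) [IsProbabilityMeasure P]
    (k : ℕ) (μ m l : ℝ) (hm : 0 < m)
    (M : Fin k → Ω → ℝ) (hmeas : ∀ i, Measurable (M i))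
    (hval : ∀ i ω, M i ω = 1/2 ∨ M i ω = 1)
    (hcond : ∀ i : Fin k, ∀ᵐ ω ∂P,
      (P[Set.indicator {ω' | M i ω' = 1/2} (fun _ => (1:ℝ)) |
          ⨆ j : Fin k, ⨆ _ : j < i, MeasurableSpace.comap (M j) inferInstance]) ω
        ≤ min 1 (μ * (2 * ((i : ℝ) + 1) + l - 1) / m)) :
    ∫ ω, ∏ i, M i ω ∂P ≥
      ∏ i : Fin k, max (1/2 : ℝ) (1 - μ * (2 * ((i : ℝ) + 1) + l - 1) / (2 * m)) := by
  induction k with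
  | zero =>
      simp
  | succ k IH =>
      set G : MeasurableSpace Ω :=
        ⨆ j : Fin (k+1), ⨆ _ : j < Fin.last k, MeasurableSpace.comap (M j) inferInstance with hGdef
      have hG : G ≤ mΩ := by
        refine iSup_le fun j => iSup_le fun _ => (hmeas j).comap_le
      haveI : SigmaFinite (P.trim hG) := by
        have : IsFiniteMeasure (P.trim hG) := isFiniteMeasure_trim hG
        infer_instance
      -- basic bounds on M
      have hMub : ∀ i ω, M i ω ≤ 1 := fun i ω => by rcases hval i ω with h | h <;> rw [h] <;> norm_num
      have hMlb : ∀ i ω, (0:ℝ) ≤ M i ω := fun i ω => by rcases hval i ω with h | h <;> rw [h] <;> norm_num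
      set F : Ω → ℝ := fun ω => ∏ j : Fin k, M j.castSucc ω with hFdef
      have hFnn : ∀ ω, 0 ≤ F ω := fun ω => Finset.prod_nonneg fun j _ => hMlb _ ω
      have hFub : ∀ ω, F ω ≤ 1 := fun ω =>
        Finset.prod_le_one (fun j _ => hMlb _ ω) (fun j _ => hMub _ ω)
      have hFmeasG : @Measurable Ω ℝ G _ F := by
        refine Finset.measurable_prod _ fun j _ => ?_
        have h1 : Measurable[MeasurableSpace.comap (M j.castSucc) inferInstance] (M j.castSucc) :=
          measurable_iff_comap_le.2 le_rfl
        exact h1.mono (le_iSup₂ (f := fun (j : Fin (k+1)) (_ : j < Fin.last k) =>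
          MeasurableSpace.comap (M j) inferInstance) j.castSucc (Fin.castSucc_lt_last j)) le_rfl
      have hFmeas : Measurable[mΩ] F := hFmeasG.mono hG le_rfl
      have hFint : Integrable F P := integrable_of_bdd hFmeas (C := 1)
        (fun ω => abs_le.2 ⟨by linarith [hFnn ω], hFub ω⟩)
      have hMlastmeas := hmeas (Fin.last k)
      have hMlastint : Integrable (M (Fin.last k)) P := integrable_of_bdd hMlastmeas (C := 1)
        (fun ω => abs_le.2 ⟨by linarith [hMlb (Fin.last k) ω], hMub _ ω⟩)
      have hFMint : Integrable (F * M (Fin.last k)) P := by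
        refine integrable_of_bdd (hFmeas.mul hMlastmeas) (C := 1) fun ω => ?_
        simp only [Pi.mul_apply]
        rw [abs_of_nonneg (mul_nonneg (hFnn ω) (hMlb _ ω))]
        nlinarith [hFnn ω, hFub ω, hMlb (Fin.last k) ω, hMub (Fin.last k) ω]
      set c : ℝ := μ * (2 * ((k:ℝ) + 1) + l - 1) / m with hcdef
      set b : ℝ := max (1/2 : ℝ) (1 - c / 2) with hbdef
      -- indicator function
      set I : Ω → ℝ := Set.indicator {ω' | M (Fin.last k) ω' = 1/2} (fun _ => (1:ℝ)) with hIdef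
      have hIint : Integrable I P := by
        have hs : MeasurableSet[mΩ] {ω' | M (Fin.last k) ω' = 1/2} :=
          hMlastmeas (measurableSet_singleton (1/2:ℝ))
        refine integrable_of_bdd (measurable_const.indicator hs) (C := 1) fun ω => ?_
        by_cases hω : ω ∈ {ω' | M (Fin.last k) ω' = 1/2}
        · rw [hIdef, Set.indicator_of_mem hω]; norm_num
        · rw [hIdef, Set.indicator_of_notMem hω]; norm_num
      have hMeq : M (Fin.last k) = (fun _ => (1:ℝ)) - (2⁻¹ : ℝ) • I := by
        funext ω
        simp only [Pi.sub_apply, Pi.smul_apply, smul_eq_mul, hIdef]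
        rcases hval (Fin.last k) ω with h | h
        · rw [h, Set.indicator_of_mem (by simpa using h)]; norm_num
        · rw [h, Set.indicator_of_notMem (by simp [h])]; norm_num
      -- lower bound on conditional expectation of last term
      have hcondlast := hcond (Fin.last k)
      have hble : ∀ᵐ ω ∂P, b ≤ (P[M (Fin.last k) | G]) ω := by
        have h1 : P[M (Fin.last k) | G] =ᵐ[P]
            (fun _ => (1:ℝ)) - (2⁻¹ : ℝ) • P[I | G] := by
          calc P[M (Fin.last k) | G] = P[(fun _ => (1:ℝ)) - (2⁻¹ : ℝ) • I | G] := by rw [hMeq]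
            _ =ᵐ[P] P[(fun _ => (1:ℝ)) | G] - P[(2⁻¹ : ℝ) • I | G] :=
                condExp_sub (integrable_const 1) (hIint.smul _) G
            _ =ᵐ[P] (fun _ => (1:ℝ)) - (2⁻¹ : ℝ) • P[I | G] := by
                filter_upwards [condExp_smul (m := G) (2⁻¹ : ℝ) I] with ω hω
                simp only [Pi.sub_apply]
                rw [condExp_const hG, hω]
        filter_upwards [h1, hcondlast] with ω h1ω h2ω
        rw [h1ω]
        simp only [Pi.sub_apply, Pi.smul_apply, smul_eq_mul]
        have hcoe : ((Fin.last k : Fin (k+1)) : ℝ) = (k : ℝ) := by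
          simp [Fin.val_last]
        rw [hcoe] at h2ω
        have : (P[I|G]) ω ≤ min 1 c := h2ω
        rcases le_total (1:ℝ) c with hc | hc
        · have h2 : min 1 c = 1 := min_eq_left hc
          have h3 : b = 1/2 := by
            rw [hbdef]; exact max_eq_left (by linarith)
          rw [h3]; rw [h2] at this; linarith
        · have h2 : min 1 c = c := min_eq_right hc
          have h3 : b = 1 - c/2 := by
            rw [hbdef]; exact max_eq_right (by linarith)
          rw [h3]; rw [h2] at this; linarith
      -- key identity
      have hkey : ∫ ω, ∏ i, M i ω ∂P = ∫ ω, F ω * (P[M (Fin.last k) | G]) ω ∂P := by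
        have e1 : ∫ ω, ∏ i, M i ω ∂P = ∫ ω, (F * M (Fin.last k)) ω ∂P := by
          refine integral_congr_ae (ae_of_all _ fun ω => ?_)
          simp only [Pi.mul_apply, hFdef]
          exact Fin.prod_univ_castSucc (fun i => M i ω)
        rw [e1, ← integral_condExp (f := F * M (Fin.last k)) hG]
        refine integral_congr_ae ?_
        filter_upwards [condExp_mul_of_stronglyMeasurable_left (m := G)
          hFmeasG.stronglyMeasurable hFMint hMlastint] with ω hω
        rw [hω]; rfl
      rw [hkey, ge_iff_le, Fin.prod_univ_castSucc]
      have hcoeprod : ∀ i : Fin k, ((i.castSucc : Fin (k+1)) : ℝ) = (i : ℝ) := fun i => by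
        simp [Fin.coe_castSucc]
      have hlastcoe : ((Fin.last k : Fin (k+1)) : ℝ) = (k : ℝ) := by simp [Fin.val_last]
      rw [hlastcoe]
      -- apply IH to the truncated family
      have hIH : (∏ i : Fin k, max (1/2 : ℝ) (1 - μ * (2 * ((i : ℝ) + 1) + l - 1) / (2 * m)))
          ≤ ∫ ω, F ω ∂P := by
        have := IH (fun j : Fin k => M j.castSucc) (fun j => hmeas j.castSucc)
          (fun j ω => hval j.castSucc ω) ?_
        · simpa [hFdef] using this
        · intro i
          have hGeq : (⨆ j : Fin k, ⨆ _ : j < i,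
              MeasurableSpace.comap (M j.castSucc) inferInstance)
              = ⨆ j : Fin (k+1), ⨆ _ : j < i.castSucc,
                MeasurableSpace.comap (M j) inferInstance := by
            apply le_antisymm
            · refine iSup_le fun j => iSup_le fun hj => ?_
              exact le_iSup₂ (f := fun (j : Fin (k+1)) (_ : j < i.castSucc) =>
                MeasurableSpace.comap (M j) inferInstance) j.castSucc
                (by simpa [Fin.castSucc_lt_castSucc_iff] using hj)
            · refine iSup_le fun j => iSup_le fun hj => ?_
              have hjk : (j : ℕ) < k := by
                have := hj
                simp only [Fin.lt_def, Fin.coe_castSucc] at this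
                omega
              have hje : (j.castLT hjk).castSucc = j := Fin.castSucc_castLT j hjk
              refine le_trans ?_ (le_iSup₂ (f := fun (j : Fin k) (_ : j < i) =>
                MeasurableSpace.comap (M j.castSucc) inferInstance) (j.castLT hjk) ?_)
              · rw [hje]
              · simp only [Fin.lt_def, Fin.coe_castLT]
                have := hj
                simp only [Fin.lt_def, Fin.coe_castSucc] at this
                omega
          have := hcond i.castSucc
          rw [← hGeq] at this
          filter_upwards [this] with ω hω
          rw [hcoeprod i] at hω
          exact hω
      have hbnn : (0:ℝ) ≤ b := le_trans (by norm_num) (le_max_left _ _)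
      calc (∏ i : Fin k, max (1/2 : ℝ)
              (1 - μ * (2 * (((i.castSucc : Fin (k+1)) : ℝ) + 1) + l - 1) / (2 * m))) *
            max (1/2 : ℝ) (1 - μ * (2 * ((k:ℝ) + 1) + l - 1) / (2 * m))
          = (∏ i : Fin k, max (1/2 : ℝ) (1 - μ * (2 * ((i : ℝ) + 1) + l - 1) / (2 * m))) * b := by
            have e3 : max (1/2 : ℝ) (1 - μ * (2 * ((k:ℝ) + 1) + l - 1) / (2 * m)) = b := by
              rw [hbdef, hcdef]; congr 2; ring
            rw [e3]
            exact congrArg (· * b) (Finset.prod_congr rfl fun i _ => by rw [hcoeprod i])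
        _ ≤ (∫ ω, F ω ∂P) * b := mul_le_mul_of_nonneg_right hIH hbnn
        _ = ∫ ω, F ω * b ∂P := (integral_mul_const b F).symm
        _ ≤ ∫ ω, F ω * (P[M (Fin.last k) | G]) ω ∂P := by
            refine integral_mono_ae (hFint.mul_const b) ?_ ?_
            · exact Integrable.bdd_mul (c := 1) integrable_condExp hFmeas.aestronglyMeasurable
                (ae_of_all _ fun ω => abs_le.2 ⟨by linarith [hFnn ω], hFub ω⟩)
            · filter_upwards [hble] with ω hω
              exact mul_le_mul_of_nonneg_left hω (hFnn ω)

/-- If `M₁,…,M_k` take values in `{1/2,1}` and almost surely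
`P(M_i = 1/2 ∣ M₁,…,M_{i−1}) ≤ min{1, μ(2i+l−1)/m}`, then
`E[∏ M_i] ≥ ∏ max{1/2, 1 − μ(2i+l−1)/(2m)}`. -/
theorem expectation_prod_multiplicities_ge
    {Ω : Type*} [MeasurableSpace Ω] (P : Measure Ω) [IsProbabilityMeasure P]
    (k : ℕ) (μ m l : ℝ) (hμ : 0 < μ) (hm : 0 < m) (hl : 0 ≤ l)
    (M : Fin k → Ω → ℝ) (hmeas : ∀ i, Measurable (M i))
    (hval : ∀ i ω, M i ω = 1/2 ∨ M i ω = 1)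
    (hcond : ∀ i : Fin k, ∀ᵐ ω ∂P,
      (P[Set.indicator {ω' | M i ω' = 1/2} (fun _ => (1:ℝ)) |
          ⨆ j : Fin k, ⨆ _ : j < i, MeasurableSpace.comap (M j) inferInstance]) ω
        ≤ min 1 (μ * (2 * ((i : ℝ) + 1) + l - 1) / m)) :
    ∫ ω, ∏ i, M i ω ∂P ≥
      ∏ i : Fin k, max (1/2 : ℝ) (1 - μ * (2 * ((i : ℝ) + 1) + l - 1) / (2 * m)) := by
  exact aux_key P k μ m l hm M hmeas hval hcond
end
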